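/- Let V be a finite set with |V| ≥ k + 1, let (Ω_v)_{v ∈ V} be finite nonempty types, and let P be a probability mass function on Π_{v ∈ V} Ω_v that factorizes according to some k-order cherry tree on V. Then there exists a (k+1)-order cherry tree on V according to which P factorizes. -/

import Mathlib

/-- A junction tree on a vertex set `V`: a finite tree `G` with nodes labeled by
clusters (finite subsets of `V`), such that no cluster is contained in the cluster
of another node and the running intersection property holds.  (The covering
condition "the clusters cover `V`" is stated separately as `JTree.CoversAll`,
so that junction trees on subsets of `V`, such as the tree formed by the
separators, can be treated uniformly.) -/
structure JTree (V : Type) [DecidableEq V] where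
  ι : Type
  [fin : Fintype ι]
  [deq : DecidableEq ι]
  G : SimpleGraph ι
  isTree : G.IsTree
  C : ι → Finset V
  noSub : ∀ i j : ι, i ≠ j → ¬ C i ⊆ C j
  rip : ∀ (i j : ι) (p : G.Walk i j), p.IsPath → ∀ x ∈ p.support, C i ∩ C j ⊆ C x

attribute [instance] JTree.fin JTree.deq

namespace JTree

variable {V : Type} [DecidableEq V]

/-- The clusters cover all of `V`: the junction tree is a junction tree "on `V`". -/
def CoversAll (T : JTree V) : Prop := ∀ v : V, ∃ i, v ∈ T.C i

/-- `T` is a `k`-order cherry tree: every cluster has exactly `k` elements and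
every edge-separator has exactly `k - 1` elements. -/
def IsCherry (T : JTree V) (k : ℕ) : Prop :=
  (∀ i, (T.C i).card = k) ∧ ∀ i j, T.G.Adj i j → (T.C i ∩ T.C j).card = k - 1

/-- The set of (distinct) separators of `T`. -/
def separators (T : JTree V) : Set (Finset V) :=
  { s | ∃ i j, T.G.Adj i j ∧ s = T.C i ∩ T.C j }

/-- The separators of `T` form a `(k-1)`-order cherry tree: there is a junction
tree whose set of clusters is exactly the set of distinct separators of `T`, in
which every cluster has `k - 1` elements and every edge-separator has `k - 2`
elements. -/
def SeparatorsFormCherry (T : JTree V) (k : ℕ) : Prop :=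
  ∃ T' : JTree V, T'.IsCherry (k - 1) ∧ Set.range T'.C = T.separators

/-- Every cluster of `T'` is the union of two clusters that are adjacent in `T`. -/
def Succ (T T' : JTree V) : Prop :=
  ∀ i' : T'.ι, ∃ i j : T.ι, T.G.Adj i j ∧ T'.C i' = T.C i ∪ T.C j

/-- `T` is a truncated R-vine at level `k`: there exists a cherry-vine sequence
`T₂, …, T_k` on `V` (with `T_m` an `m`-order cherry tree on `V` and each cluster of
`T_{m+1}` the union of two adjacent clusters of `T_m`) whose top tree `T_k` is `T`. -/
def IsTruncatedRVine (T : JTree V) (k : ℕ) : Prop :=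
  ∃ Ts : ℕ → JTree V,
    (∀ m, 2 ≤ m → m ≤ k → (Ts m).CoversAll ∧ (Ts m).IsCherry m) ∧
    (∀ m, 2 ≤ m → m < k → Succ (Ts m) (Ts (m + 1))) ∧
    Ts k = T

/-- The separator attached to an edge of the tree, as a function on `Sym2`. -/
noncomputable def sep (T : JTree V) : Sym2 T.ι → Finset V :=
  Sym2.lift ⟨fun i j => T.C i ∩ T.C j, fun _ _ => Finset.inter_comm _ _⟩

/-- The (finite) set of edges of the tree underlying `T`. -/
noncomputable def edgeFinset (T : JTree V) : Finset (Sym2 T.ι) :=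
  Set.Finite.toFinset (Set.toFinite T.G.edgeSet)

end JTree

open scoped BigOperators

/- The marginal of a probability mass function `P` on `Π v, Ω v` with respect to
a set `A` of coordinates: `P_A(x) = P { y | y v = x v for all v ∈ A }`. -/
open Classical in
noncomputable def marg {V : Type} [Fintype V] {Ω : V → Type} [∀ v, Fintype (Ω v)]
    (P : (∀ v, Ω v) → ℝ) (A : Finset V) (x : ∀ v, Ω v) : ℝ :=
  ∑ y : ∀ v, Ω v, if ∀ v ∈ A, y v = x v then P y else 0

/-- `P` factorizes according to the junction tree `T`:
`P(x) ⬝ ∏_{edges {i,j}} P_{C i ∩ C j}(x) = ∏_{nodes i} P_{C i}(x)` for every `x`. -/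
noncomputable def Factorizes {V : Type} [Fintype V] [DecidableEq V]
    {Ω : V → Type} [∀ v, Fintype (Ω v)]
    (T : JTree V) (P : (∀ v, Ω v) → ℝ) : Prop :=
  ∀ x : ∀ v, Ω v,
    P x * ∏ e ∈ T.edgeFinset, marg P (T.sep e) x = ∏ i : T.ι, marg P (T.C i) x


namespace CherryAux

open Finset

variable {V : Type} [Fintype V] [DecidableEq V] {Ω : V → Type} [∀ v, Fintype (Ω v)]
variable {P : (∀ v, Ω v) → ℝ}

lemma ite_inst {α : Sort*} {c : Prop} {i1 i2 : Decidable c} {a b : α} :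
    @ite _ c i1 a b = @ite _ c i2 a b := by
  cases Subsingleton.elim i1 i2; rfl

open Classical in
lemma marg_def (P : (∀ v, Ω v) → ℝ) (A : Finset V) (x : ∀ v, Ω v) :
    marg P A x = ∑ y : ∀ v, Ω v, if ∀ v ∈ A, y v = x v then P y else 0 := by
  unfold marg
  refine Finset.sum_congr (by congr 1; exact Subsingleton.elim _ _) fun y _ => ?_
  exact ite_inst

open Classical in
lemma marg_nonneg (hP0 : ∀ y, 0 ≤ P y) (A : Finset V) (x : ∀ v, Ω v) :
    0 ≤ marg P A x := by
  rw [marg_def]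
  refine Finset.sum_nonneg fun y _ => ?_
  split_ifs
  · exact hP0 y
  · exact le_refl 0

open Classical in
lemma marg_mono (hP0 : ∀ y, 0 ≤ P y) {A B : Finset V} (hAB : A ⊆ B) (x : ∀ v, Ω v) :
    marg P B x ≤ marg P A x := by
  rw [marg_def, marg_def]
  refine Finset.sum_le_sum fun y _ => ?_
  split_ifs with h1 h2
  · exact le_refl _
  · exact absurd (fun v hv => h1 v (hAB hv)) h2
  · exact hP0 y
  · exact le_refl 0

open Classical in
lemma self_le_marg (hP0 : ∀ y, 0 ≤ P y) (A : Finset V) (x : ∀ v, Ω v) :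
    P x ≤ marg P A x := by
  rw [marg_def]
  calc P x = if ∀ v ∈ A, x v = x v then P x else 0 := (if_pos (fun v _ => rfl)).symm
    _ ≤ _ := by
        refine Finset.single_le_sum (f := fun y => if ∀ v ∈ A, y v = x v then P y else 0)
          (fun y _ => ?_) (Finset.mem_univ x)
        split_ifs
        · exact hP0 y
        · exact le_refl 0

open Classical in
lemma marg_univ (x : ∀ v, Ω v) : marg P (Finset.univ : Finset V) x = P x := by
  rw [marg_def]
  calc (∑ y : ∀ v, Ω v, if ∀ v ∈ (Finset.univ : Finset V), y v = x v then P y else 0)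
      = ∑ y : ∀ v, Ω v, if y = x then P y else 0 := by
        refine Finset.sum_congr rfl fun y _ => ?_
        congr 1
        simp only [Finset.mem_univ, true_implies, eq_iff_iff]
        exact ⟨fun h => funext h, fun h v => congrFun h v⟩
    _ = P x := by simp

lemma marg_congr {A : Finset V} {x x' : ∀ v, Ω v} (h : ∀ v ∈ A, x v = x' v) :
    marg P A x = marg P A x' := by
  rw [marg_def, marg_def]
  refine Finset.sum_congr rfl fun y _ => ?_
  congr 1
  simp only [eq_iff_iff]
  constructor
  · intro hy v hv; rw [hy v hv, h v hv]
  · intro hy v hv; rw [hy v hv, ← h v hv]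

lemma marg_zero_of_subset (hP0 : ∀ y, 0 ≤ P y) {A B : Finset V} (hAB : A ⊆ B)
    {x : ∀ v, Ω v} (h : marg P A x = 0) : marg P B x = 0 :=
  le_antisymm (h ▸ marg_mono hP0 hAB x) (marg_nonneg hP0 B x)

open Classical in
lemma count_aux (A B : Finset V) (x y : ∀ v, Ω v) :
    ((Finset.univ.filter (fun z : ∀ v, Ω v =>
        (∀ v ∈ B, z v = x v) ∧ (∀ v ∈ A, y v = z v))).card : ℝ)
      = if ∀ v ∈ A ∩ B, y v = x v then ∏ v ∈ (A ∪ B)ᶜ, (Fintype.card (Ω v) : ℝ) else 0 := by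
  set S : ∀ v, Finset (Ω v) := fun v =>
    (if v ∈ B then {x v} else Finset.univ) ∩ (if v ∈ A then {y v} else Finset.univ) with hS
  have hfilter : (Finset.univ.filter (fun z : ∀ v, Ω v =>
      (∀ v ∈ B, z v = x v) ∧ (∀ v ∈ A, y v = z v))) = Fintype.piFinset S := by
    ext z
    simp only [Finset.mem_filter, Finset.mem_univ, true_and, Fintype.mem_piFinset, hS,
      Finset.mem_inter]
    constructor
    · intro ⟨h1, h2⟩ v
      constructor
      · split_ifs with hv
        · simp [h1 v hv]
        · simp
      · split_ifs with hv
        · simp [(h2 v hv).symm]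
        · simp
    · intro h
      constructor
      · intro v hv
        have := (h v).1
        rw [if_pos hv] at this
        simpa using this
      · intro v hv
        have := (h v).2
        rw [if_pos hv] at this
        simp only [Finset.mem_singleton] at this
        exact this.symm
  rw [hfilter, Fintype.card_piFinset]
  push_cast
  rw [← Finset.prod_mul_prod_compl (A ∪ B) (fun v => ((S v).card : ℝ))]
  have hout : ∀ v ∈ (A ∪ B)ᶜ, ((S v).card : ℝ) = (Fintype.card (Ω v) : ℝ) := by
    intro v hv
    simp only [Finset.mem_compl, Finset.mem_union, not_or] at hv
    simp [hS, if_neg hv.1, if_neg hv.2, Finset.card_univ]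
  rw [Finset.prod_congr rfl hout]
  have hin : ∏ v ∈ A ∪ B, ((S v).card : ℝ)
      = ∏ v ∈ A ∩ B, ((S v).card : ℝ) := by
    refine (Finset.prod_subset Finset.inter_subset_union ?_).symm
    intro v hv hv'
    simp only [Finset.mem_union] at hv
    simp only [Finset.mem_inter, not_and] at hv'
    rcases hv with hv | hv
    · have hvB : v ∉ B := fun hB => hv' hv hB
      simp [hS, if_pos hv, if_neg hvB]
    · by_cases hvA : v ∈ A
      · exact absurd hv (hv' hvA)
      · simp [hS, if_neg hvA, if_pos hv]
  rw [hin]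
  have hsingle : ∀ v ∈ A ∩ B, ((S v).card : ℝ) = if y v = x v then 1 else 0 := by
    intro v hv
    simp only [Finset.mem_inter] at hv
    simp only [hS, if_pos hv.1, if_pos hv.2]
    by_cases h : y v = x v
    · simp [h]
    · rw [if_neg h]
      have : ({x v} ∩ {y v} : Finset (Ω v)) = ∅ := by
        ext a; simp only [Finset.mem_inter, Finset.mem_singleton, Finset.notMem_empty,
          iff_false, not_and]
        rintro rfl h2
        exact h h2.symm
      simp [this]
  rw [Finset.prod_congr rfl hsingle, Finset.prod_boole]
  split_ifs with h
  · ring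
  · ring

open Classical in
lemma margsum (A B : Finset V) (x : ∀ v, Ω v) :
    ∑ z : ∀ v, Ω v, (if ∀ v ∈ B, z v = x v then marg P A z else 0)
      = (∏ v ∈ (A ∪ B)ᶜ, (Fintype.card (Ω v) : ℝ)) * marg P (A ∩ B) x := by
  calc (∑ z : ∀ v, Ω v, if ∀ v ∈ B, z v = x v then marg P A z else 0)
      = ∑ z : ∀ v, Ω v, ∑ y : ∀ v, Ω v,
          (if (∀ v ∈ B, z v = x v) ∧ (∀ v ∈ A, y v = z v) then P y else 0) := by
        refine Finset.sum_congr rfl fun z _ => ?_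
        rw [marg_def]
        split_ifs with h
        · refine Finset.sum_congr rfl fun y _ => ?_
          exact (if_congr (and_iff_right h).symm rfl rfl)
        · symm
          refine Finset.sum_eq_zero fun y _ => ?_
          rw [if_neg (fun hc => h hc.1)]
    _ = ∑ y : ∀ v, Ω v, ∑ z : ∀ v, Ω v,
          (if (∀ v ∈ B, z v = x v) ∧ (∀ v ∈ A, y v = z v) then P y else 0) :=
        Finset.sum_comm
    _ = ∑ y : ∀ v, Ω v, P y *
          ((Finset.univ.filter (fun z : ∀ v, Ω v =>
            (∀ v ∈ B, z v = x v) ∧ (∀ v ∈ A, y v = z v))).card : ℝ) := by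
        refine Finset.sum_congr rfl fun y _ => ?_
        rw [← Finset.sum_filter, Finset.sum_const, nsmul_eq_mul, mul_comm]
    _ = ∑ y : ∀ v, Ω v,
          (if ∀ v ∈ A ∩ B, y v = x v then P y else 0) *
            (∏ v ∈ (A ∪ B)ᶜ, (Fintype.card (Ω v) : ℝ)) := by
        refine Finset.sum_congr rfl fun y _ => ?_
        rw [count_aux A B x y]
        split_ifs with h
        · ring
        · ring
    _ = (∏ v ∈ (A ∪ B)ᶜ, (Fintype.card (Ω v) : ℝ)) * marg P (A ∩ B) x := by
        rw [← Finset.sum_mul, marg_def, mul_comm]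

omit [DecidableEq V] in
lemma prodcard_pos [∀ v, Nonempty (Ω v)] (s : Finset V) :
    0 < ∏ v ∈ s, (Fintype.card (Ω v) : ℝ) := by
  refine Finset.prod_pos fun v _ => ?_
  exact_mod_cast Fintype.card_pos

end CherryAux

namespace CherryAux

open SimpleGraph

variable {α : Type} [Fintype α] [DecidableEq α]

/-- The graph of a parent function with root `ρ`. -/
def pgraph (par : α → α) (ρ : α) : SimpleGraph α where
  Adj x y := x ≠ y ∧ ((x ≠ ρ ∧ par x = y) ∨ (y ≠ ρ ∧ par y = x))
  symm := by
    constructor; intro x y ⟨h1, h2⟩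
    exact ⟨h1.symm, h2.symm⟩
  loopless := by constructor; intro x ⟨h1, _⟩; exact h1 rfl

variable {par : α → α} {ρ : α} {rk : α → ℕ}

lemma pgraph_adj_parent (hrk : ∀ x, x ≠ ρ → rk (par x) < rk x) {x : α} (hx : x ≠ ρ) :
    (pgraph par ρ).Adj x (par x) := by
  refine ⟨?_, Or.inl ⟨hx, rfl⟩⟩
  intro h
  have h2 := hrk x hx
  rw [← h] at h2
  exact lt_irrefl _ h2

lemma rk_iterate_le (hρ : par ρ = ρ) (hrk : ∀ x, x ≠ ρ → rk (par x) < rk x) :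
    ∀ (n : ℕ) (y : α), rk (par^[n] y) ≤ rk y := by
  intro n
  induction n with
  | zero => intro y; exact le_refl _
  | succ m ih =>
    intro y
    rw [Function.iterate_succ_apply]
    refine le_trans (ih (par y)) ?_
    by_cases hy : y = ρ
    · subst hy; rw [hρ]
    · exact le_of_lt (hrk y hy)

lemma pgraph_reachable (hrk : ∀ x, x ≠ ρ → rk (par x) < rk x) (x : α) :
    (pgraph par ρ).Reachable x ρ := by
  have key : ∀ (n : ℕ) (y : α), rk y ≤ n → (pgraph par ρ).Reachable y ρ := by
    intro n
    induction n with
    | zero =>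
      intro y hy
      by_cases h : y = ρ
      · subst h; exact Reachable.refl _
      · exact absurd (lt_of_lt_of_le (hrk y h) hy) (Nat.not_lt_zero _)
    | succ m ih =>
      intro y hy
      by_cases h : y = ρ
      · subst h; exact Reachable.refl _
      · exact (Adj.reachable (pgraph_adj_parent hrk h)).trans
          (ih (par y) (Nat.lt_succ_iff.mp (lt_of_lt_of_le (hrk y h) hy)))
  exact key (rk x) x (le_refl _)

lemma pgraph_isTree (hρ : par ρ = ρ) (hrk : ∀ x, x ≠ ρ → rk (par x) < rk x) :
    (pgraph par ρ).IsTree := by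
  constructor
  · haveI : Nonempty α := ⟨ρ⟩
    exact ⟨fun x y => (pgraph_reachable hrk x).trans (pgraph_reachable hrk y).symm⟩
  · rw [isAcyclic_iff_forall_adj_isBridge]
    have main : ∀ x : α, x ≠ ρ → (pgraph par ρ).IsBridge s(x, par x) := by
      intro x hx
      rw [isBridge_iff]
      refine fun hreach => ?_
      obtain ⟨w⟩ := hreach
      set S : Set α := {y | ∃ n, par^[n] y = x} with hSdef
      have hxS : x ∈ S := ⟨0, rfl⟩
      have hpx : par x ∉ S := by
        rintro ⟨n, hn⟩
        have h1 : rk (par^[n] (par x)) ≤ rk (par x) := rk_iterate_le hρ hrk n (par x)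
        rw [hn] at h1
        exact absurd (lt_of_le_of_lt h1 (hrk x hx)) (lt_irrefl _)
      obtain ⟨d, hd, hdS, hdS'⟩ := w.exists_boundary_dart S hxS hpx
      have hadj : ((pgraph par ρ) \ SimpleGraph.fromEdgeSet {s(x, par x)}).Adj d.fst d.snd :=
        d.adj
      rw [SimpleGraph.sdiff_adj] at hadj
      obtain ⟨⟨hne, hor⟩, hnot⟩ := hadj
      have hedge : s(d.fst, d.snd) ≠ s(x, par x) := by
        intro h
        exact hnot (by rw [SimpleGraph.fromEdgeSet_adj]; exact ⟨by rw [h]; rfl, hne⟩)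
      obtain ⟨n, hn⟩ := hdS
      rcases hor with ⟨hfst, hpar⟩ | ⟨hsnd, hpar⟩
      · cases n with
        | zero =>
          simp only [Function.iterate_zero, id] at hn
          exact hedge (by rw [← hpar, hn])
        | succ m =>
          refine hdS' ⟨m, ?_⟩
          rw [Function.iterate_succ_apply] at hn
          rw [← hpar]
          exact hn
      · refine hdS' ⟨n + 1, ?_⟩
        rw [Function.iterate_succ_apply, hpar, hn]
    intro v w hadj
    rcases hadj.2 with ⟨hv, hp⟩ | ⟨hw, hp⟩
    · rw [← hp]; exact main v hv
    · rw [Sym2.eq_swap, ← hp]; exact main w hw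

lemma pgraph_adj_iff {x y : α} :
    (pgraph par ρ).Adj x y ↔ x ≠ y ∧ ((x ≠ ρ ∧ par x = y) ∨ (y ≠ ρ ∧ par y = x)) :=
  Iff.rfl

lemma pgraph_edge_mk_inj (hrk : ∀ x, x ≠ ρ → rk (par x) < rk x) {a b : α}
    (ha : a ≠ ρ) (hb : b ≠ ρ) (h : s(a, par a) = s(b, par b)) : a = b := by
  rw [Sym2.eq_iff] at h
  rcases h with ⟨h1, _⟩ | ⟨h1, h2⟩
  · exact h1
  · exfalso
    subst h2
    have h3 := hrk (par a) hb
    rw [← h1] at h3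
    have h4 := hrk a ha
    omega

lemma pgraph_edgeSet (hrk : ∀ x, x ≠ ρ → rk (par x) < rk x) :
    (pgraph par ρ).edgeSet = ⋃ x ∈ {y : α | y ≠ ρ}, {s(x, par x)} := by
  ext e
  induction e with
  | _ a b =>
    simp only [SimpleGraph.mem_edgeSet, Set.mem_iUnion, Set.mem_singleton_iff,
      Set.mem_setOf_eq]
    constructor
    · rintro ⟨hne, ⟨ha, hp⟩ | ⟨hb, hp⟩⟩
      · exact ⟨a, ha, by rw [hp]⟩
      · exact ⟨b, hb, by rw [hp, Sym2.eq_swap]⟩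
    · rintro ⟨x, hx, he⟩
      rw [← SimpleGraph.mem_edgeSet, he, SimpleGraph.mem_edgeSet]
      exact pgraph_adj_parent hrk hx

end CherryAux

namespace CherryAux

open SimpleGraph

variable {V : Type} [DecidableEq V]

/-- The unique path between two nodes of the tree underlying a junction tree. -/
noncomputable def pth (T : JTree V) (i j : T.ι) : T.G.Walk i j :=
  (T.isTree.existsUnique_path i j).exists.choose

lemma pth_isPath (T : JTree V) (i j : T.ι) : (pth T i j).IsPath :=
  (T.isTree.existsUnique_path i j).exists.choose_spec

lemma pth_unique {T : JTree V} {i j : T.ι} {p : T.G.Walk i j} (hp : p.IsPath) :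
    p = pth T i j := by
  obtain ⟨q, hq, huniq⟩ := T.isTree.existsUnique_path i j
  rw [huniq p hp, huniq (pth T i j) (pth_isPath T i j)]

lemma pth_self (T : JTree V) (i : T.ι) : pth T i i = SimpleGraph.Walk.nil :=
  (pth_unique SimpleGraph.Walk.IsPath.nil).symm

lemma pth_of_cons {T : JTree V} {a b c : T.ι} (h : T.G.Adj a b)
    (hs : a ∉ (pth T b c).support) :
    pth T a c = SimpleGraph.Walk.cons h (pth T b c) :=
  (pth_unique ((pth_isPath T b c).cons hs)).symm

lemma exists_cons {T : JTree V} {i j : T.ι} (hij : i ≠ j) :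
    ∃ (x : T.ι) (h : T.G.Adj i x) (q : T.G.Walk x j),
      pth T i j = SimpleGraph.Walk.cons h q ∧ q.IsPath ∧ q = pth T x j := by
  cases hp : pth T i j with
  | nil => exact absurd rfl hij
  | cons h q =>
    have hpath : (SimpleGraph.Walk.cons h q).IsPath := hp ▸ pth_isPath T i j
    exact ⟨_, h, q, rfl, hpath.of_cons, pth_unique hpath.of_cons⟩

section Root

variable (T : JTree V) (r : T.ι)

/-- The parent of a node in the tree rooted at `r`. -/
noncomputable def par (i : T.ι) : T.ι := (pth T i r).getVert 1

/-- The depth of a node in the tree rooted at `r`. -/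
noncomputable def depth (i : T.ι) : ℕ := (pth T i r).length

variable {T r}

lemma par_r : par T r r = r := by
  unfold par
  rw [pth_self]
  rfl

lemma depth_r : depth T r r = 0 := by
  unfold depth; rw [pth_self]; rfl

lemma depth_eq_zero_iff {i : T.ι} : depth T r i = 0 ↔ i = r := by
  constructor
  · intro h
    exact SimpleGraph.Walk.eq_of_length_eq_zero h
  · rintro rfl; exact depth_r

lemma adj_par {i : T.ι} (h : i ≠ r) : T.G.Adj i (par T r i) := by
  unfold par
  have hlen : 0 < (pth T i r).length := by
    rcases Nat.eq_zero_or_pos (pth T i r).length with h0 | h0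
    · exact absurd (SimpleGraph.Walk.eq_of_length_eq_zero h0) h
    · exact h0
  have := SimpleGraph.Walk.adj_getVert_succ (pth T i r) hlen
  rwa [SimpleGraph.Walk.getVert_zero] at this

lemma pth_par {i : T.ι} (h : i ≠ r) :
    pth T i r = SimpleGraph.Walk.cons (adj_par h) (pth T (par T r i) r) := by
  obtain ⟨x, hadj, q, hq, hqp, hqe⟩ := exists_cons h
  have hx : par T r i = x := by
    unfold par
    rw [hq]
    simp [SimpleGraph.Walk.getVert_cons_succ, SimpleGraph.Walk.getVert_zero]
  subst hx
  rw [hq, hqe]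

lemma depth_par {i : T.ι} (h : i ≠ r) : depth T r (par T r i) + 1 = depth T r i := by
  unfold depth
  rw [pth_par h, SimpleGraph.Walk.length_cons]

lemma support_pth_par {i : T.ι} (h : i ≠ r) :
    (pth T i r).support = i :: (pth T (par T r i) r).support := by
  rw [pth_par h, SimpleGraph.Walk.support_cons]

lemma par_mem_pth {i : T.ι} (h : i ≠ r) : par T r i ∈ (pth T i r).support := by
  rw [support_pth_par h]
  exact List.mem_cons_of_mem _ (SimpleGraph.Walk.start_mem_support _)

/-- Every element of the path to the root is an iterated parent. -/
lemma mem_pth_root {i x : T.ι} (hx : x ∈ (pth T i r).support) :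
    ∃ n, (par T r)^[n] i = x ∧ depth T r x + n = depth T r i := by
  suffices H : ∀ (d : ℕ) (i : T.ι), depth T r i ≤ d → x ∈ (pth T i r).support →
      ∃ n, (par T r)^[n] i = x ∧ depth T r x + n = depth T r i by
    exact H (depth T r i) i (le_refl _) hx
  intro d
  induction d with
  | zero =>
    intro i hd hx
    have hir : i = r := depth_eq_zero_iff.mp (Nat.le_zero.mp hd)
    subst hir
    rw [pth_self] at hx
    simp only [SimpleGraph.Walk.support_nil, List.mem_singleton] at hx
    subst hx
    exact ⟨0, rfl, by omega⟩
  | succ m ih =>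
    intro i hd hx
    by_cases h : i = r
    · subst h
      rw [pth_self] at hx
      simp only [SimpleGraph.Walk.support_nil, List.mem_singleton] at hx
      subst hx
      exact ⟨0, rfl, by omega⟩
    · rw [support_pth_par h] at hx
      rcases List.mem_cons.mp hx with rfl | hx'
      · exact ⟨0, rfl, by omega⟩
      · have hdp : depth T r (par T r i) ≤ m := by
          have := depth_par h; omega
        obtain ⟨n, hn, hdn⟩ := ih (par T r i) hdp hx'
        refine ⟨n + 1, ?_, ?_⟩
        · rw [Function.iterate_succ_apply, hn]
        · have := depth_par h; omega

lemma anc_trans {i x : T.ι} (hx : x ∈ (pth T i r).support) :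
    (pth T x r).support ⊆ (pth T i r).support := by
  suffices H : ∀ (d : ℕ) (i : T.ι), depth T r i ≤ d → x ∈ (pth T i r).support →
      (pth T x r).support ⊆ (pth T i r).support by
    exact H (depth T r i) i (le_refl _) hx
  intro d
  induction d with
  | zero =>
    intro i hd hx
    have hir : i = r := depth_eq_zero_iff.mp (Nat.le_zero.mp hd)
    subst hir
    rw [pth_self] at hx
    simp only [SimpleGraph.Walk.support_nil, List.mem_singleton] at hx
    subst hx
    exact fun y hy => hy
  | succ m ih =>
    intro i hd hx
    by_cases h : i = r
    · subst h
      rw [pth_self] at hx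
      simp only [SimpleGraph.Walk.support_nil, List.mem_singleton] at hx
      subst hx
      exact fun y hy => hy
    · rw [support_pth_par h] at hx ⊢
      rcases List.mem_cons.mp hx with rfl | hx'
      · rw [← support_pth_par h]
        exact fun y hy => hy
      · have hdp : depth T r (par T r i) ≤ m := by
          have := depth_par h; omega
        exact fun y hy => List.mem_cons_of_mem _ (ih (par T r i) hdp hx' hy)

lemma depth_le_of_adj {a b : T.ι} (h : T.G.Adj a b) :
    depth T r b ≤ depth T r a + 1 := by
  have hw : ((SimpleGraph.Walk.cons h.symm (pth T a r)).bypass).IsPath :=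
    SimpleGraph.Walk.bypass_isPath _
  calc depth T r b = (pth T b r).length := rfl
    _ = ((SimpleGraph.Walk.cons h.symm (pth T a r)).bypass).length := by
        rw [← pth_unique hw]
    _ ≤ (SimpleGraph.Walk.cons h.symm (pth T a r)).length :=
        SimpleGraph.Walk.length_bypass_le _
    _ = depth T r a + 1 := by rw [SimpleGraph.Walk.length_cons]; rfl

lemma anc_adj {a b : T.ι} (h : T.G.Adj a b) (ha : a ∈ (pth T b r).support) :
    b ≠ r ∧ par T r b = a := by
  obtain ⟨n, hn, hd⟩ := mem_pth_root ha
  rcases n with _ | n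
  · simp only [Function.iterate_zero, id] at hn
    exact absurd (hn ▸ h) (T.G.loopless.irrefl b)
  rcases n with _ | m
  · simp only [Function.iterate_succ_apply', Function.iterate_zero, id] at hn
    have hbr : b ≠ r := by
      intro hbe
      rw [hbe] at h
      rw [hbe, par_r] at hn
      rw [hn] at h
      exact T.G.loopless.irrefl a h
    exact ⟨hbr, hn⟩
  · exfalso
    have h1 : depth T r b ≤ depth T r a + 1 := depth_le_of_adj h
    omega

lemma parent_or {a b : T.ι} (h : T.G.Adj a b) :
    (a ≠ r ∧ par T r a = b) ∨ (b ≠ r ∧ par T r b = a) := by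
  by_cases hmem : a ∈ (pth T b r).support
  · exact Or.inr (anc_adj h hmem)
  · have hc : pth T a r = SimpleGraph.Walk.cons h (pth T b r) := pth_of_cons h hmem
    have hb : b ∈ (pth T a r).support := by
      rw [hc, SimpleGraph.Walk.support_cons]
      exact List.mem_cons_of_mem _ (SimpleGraph.Walk.start_mem_support _)
    exact Or.inl (anc_adj h.symm hb)

lemma adj_or_mem {a b x : T.ι} (h : T.G.Adj a b) :
    b ∈ (pth T x a).support ∨ a ∈ (pth T x b).support := by
  by_cases hb : b ∈ (pth T x a).support
  · exact Or.inl hb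
  · right
    have h1 : (SimpleGraph.Walk.cons h.symm (pth T x a).reverse).IsPath := by
      refine (pth_isPath T x a).reverse.cons ?_
      rw [SimpleGraph.Walk.support_reverse, List.mem_reverse]
      exact hb
    have h2 : ((SimpleGraph.Walk.cons h.symm (pth T x a).reverse).reverse).IsPath :=
      h1.reverse
    have h3 : (SimpleGraph.Walk.cons h.symm (pth T x a).reverse).reverse = pth T x b :=
      pth_unique h2
    rw [← h3, SimpleGraph.Walk.support_reverse, List.mem_reverse,
      SimpleGraph.Walk.support_cons]
    exact List.mem_cons_of_mem _
      (by rw [SimpleGraph.Walk.support_reverse, List.mem_reverse]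
          exact SimpleGraph.Walk.end_mem_support _)

/-- In the rooted tree, either `i` lies on the path from `j` to the root, or
the parent of `i` lies on the path from `i` to `j`. -/
lemma up_or_down : ∀ (i j : T.ι), i ≠ r →
    i ∈ (pth T j r).support ∨ par T r i ∈ (pth T i j).support := by
  suffices H : ∀ (n : ℕ) (i j : T.ι), (pth T i j).length ≤ n → i ≠ r →
      i ∈ (pth T j r).support ∨ par T r i ∈ (pth T i j).support by
    intro i j hir
    exact H (pth T i j).length i j (le_refl _) hir
  intro n
  induction n with
  | zero =>
    intro i j hlen hir
    have : i = j := SimpleGraph.Walk.eq_of_length_eq_zero (Nat.le_zero.mp hlen)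
    subst this
    exact Or.inl (SimpleGraph.Walk.start_mem_support _)
  | succ m ih =>
    intro i j hlen hir
    by_cases hij : i = j
    · subst hij
      exact Or.inl (SimpleGraph.Walk.start_mem_support _)
    · obtain ⟨x, hadj, q, hq, hqpath, hqe⟩ := exists_cons hij
      rcases parent_or hadj with ⟨_, hpar⟩ | ⟨hxr, hpar⟩
      · right
        rw [hq, SimpleGraph.Walk.support_cons, hpar]
        exact List.mem_cons_of_mem _ (SimpleGraph.Walk.start_mem_support _)
      · by_cases hxj : x = j
        · subst hxj
          left
          rw [← hpar]
          exact par_mem_pth hxr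
        · have hlq : (pth T x j).length ≤ m := by
            rw [← hqe]
            have : (pth T i j).length = q.length + 1 := by
              rw [hq, SimpleGraph.Walk.length_cons]
            omega
          rcases ih x j hlq hxr with hx | hpx
          · left
            have h1 : (pth T x r).support ⊆ (pth T j r).support := anc_trans hx
            have h2 : i ∈ (pth T x r).support := by
              rw [← hpar]
              exact par_mem_pth hxr
            exact h1 h2
          · exfalso
            rw [hpar, ← hqe] at hpx
            have hni : i ∉ q.support := by
              have hpath : (SimpleGraph.Walk.cons hadj q).IsPath := by
                rw [← hq]; exact pth_isPath T i j
              exact (SimpleGraph.Walk.cons_isPath_iff _ _).mp hpath |>.2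
            exact hni hpx

lemma rip_pth (i j : T.ι) {x : T.ι} (hx : x ∈ (pth T i j).support) :
    T.C i ∩ T.C j ⊆ T.C x :=
  T.rip i j (pth T i j) (pth_isPath T i j) x hx

/-- Key lemma: if `v ∈ C i` but `v ∉ C (par i)`, then every node whose cluster
contains `v` lies below `i` (that is, `i` is on its path to the root). -/
lemma k1 {v : V} {i j : T.ι} (hir : i ≠ r) (hvi : v ∈ T.C i)
    (hvp : v ∉ T.C (par T r i)) (hvj : v ∈ T.C j) :
    i ∈ (pth T j r).support := by
  rcases up_or_down i j hir with h | h
  · exact h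
  · exact absurd (rip_pth i j h (Finset.mem_inter.mpr ⟨hvi, hvj⟩)) hvp

end Root

/-- Any tree (underlying a junction tree) with two distinct nodes has a leaf. -/
lemma exists_leaf (T : JTree V) (hex : ∃ a b : T.ι, a ≠ b) :
    ∃ (r c0 : T.ι), T.G.Adj r c0 ∧ (∀ x, T.G.Adj r x → x = c0) := by
  classical
  obtain ⟨a, b, hab⟩ := hex
  obtain ⟨⟨r, w⟩, -, hmax⟩ := Finset.exists_max_image
    (Finset.univ ×ˢ Finset.univ) (fun p : T.ι × T.ι => (pth T p.1 p.2).length)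
    ⟨(a, b), by simp⟩
  have hrw : r ≠ w := by
    rintro rfl
    have h1 := hmax (a, b) (by simp)
    simp only at h1
    rw [pth_self] at h1
    simp only [SimpleGraph.Walk.length_nil, Nat.le_zero] at h1
    exact hab (SimpleGraph.Walk.eq_of_length_eq_zero h1)
  obtain ⟨c0, hadj, q, hq, hqpath, hqe⟩ := exists_cons hrw
  refine ⟨r, c0, hadj, fun x hx => ?_⟩
  by_cases hmem : r ∈ (pth T x w).support
  · exfalso
    have hts := (pth T x w).take_spec hmem
    have hlen : ((pth T x w).takeUntil r hmem).length
        + ((pth T x w).dropUntil r hmem).length = (pth T x w).length := by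
      rw [← SimpleGraph.Walk.length_append, hts]
    have hbp : ((pth T x w).dropUntil r hmem).bypass.IsPath :=
      SimpleGraph.Walk.bypass_isPath _
    have heq : ((pth T x w).dropUntil r hmem).bypass = pth T r w := pth_unique hbp
    have h1 : (pth T r w).length ≤ ((pth T x w).dropUntil r hmem).length := by
      rw [← heq]
      exact SimpleGraph.Walk.length_bypass_le _
    have h2 := hmax (x, w) (by simp)
    simp only at h2
    have h3 : ((pth T x w).takeUntil r hmem).length = 0 := by omega
    exact hx.ne' (SimpleGraph.Walk.eq_of_length_eq_zero h3)
  · have hc : pth T r w = SimpleGraph.Walk.cons hx (pth T x w) := pth_of_cons hx hmem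
    have hsup : (SimpleGraph.Walk.cons hadj q).support
        = (SimpleGraph.Walk.cons hx (pth T x w)).support := by
      rw [← hq, ← hc]
    rw [SimpleGraph.Walk.support_cons, SimpleGraph.Walk.support_cons] at hsup
    have htails : q.support = (pth T x w).support := (List.cons_eq_cons.mp hsup).2
    have h1 : q.support = c0 :: q.support.tail := SimpleGraph.Walk.support_eq_cons q
    have h2 : (pth T x w).support = x :: (pth T x w).support.tail :=
      SimpleGraph.Walk.support_eq_cons _
    rw [h1, h2] at htails
    exact (List.cons_eq_cons.mp htails).1.symm

end CherryAux



namespace CherryAux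

open Finset

section Claim

variable {V : Type} [Fintype V] [DecidableEq V] {Ω : V → Type} [∀ v, Fintype (Ω v)]
  [∀ v, Nonempty (Ω v)] {P : (∀ v, Ω v) → ℝ}

open Classical in
/-- The edges of the tree both of whose endpoints lie in `W`. -/
noncomputable def Ew (T : JTree V) (W : Finset T.ι) : Finset (Sym2 T.ι) :=
  T.edgeFinset.filter (fun e => ∀ a ∈ e, a ∈ W)

lemma mem_edgeFinset {T : JTree V} {a b : T.ι} :
    s(a, b) ∈ T.edgeFinset ↔ T.G.Adj a b := by
  unfold JTree.edgeFinset
  rw [Set.Finite.mem_toFinset, SimpleGraph.mem_edgeSet]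

lemma mem_Ew {T : JTree V} {W : Finset T.ι} {e : Sym2 T.ι} :
    e ∈ Ew T W ↔ e ∈ T.edgeFinset ∧ ∀ a ∈ e, a ∈ W := by
  classical
  unfold Ew
  rw [Finset.mem_filter]

lemma sep_mk {T : JTree V} (a b : T.ι) : T.sep s(a, b) = T.C a ∩ T.C b := rfl

/-- `W` is a convex (path-closed) nonempty set of nodes. -/
def Conv (T : JTree V) (W : Finset T.ι) : Prop :=
  W.Nonempty ∧ ∀ i ∈ W, ∀ j ∈ W, ∀ x ∈ (pth T i j).support, x ∈ W

lemma pth_reverse (T : JTree V) (i j : T.ι) : pth T j i = (pth T i j).reverse :=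
  (pth_unique (pth_isPath T i j).reverse).symm

open Classical in
/-- The key marginalization identity for convex sets of nodes. -/
lemma claim_eq {T : JTree V} (hP0 : ∀ y, 0 ≤ P y) (hcov : T.CoversAll)
    (hfac : Factorizes T P) :
    ∀ (W : Finset T.ι), Conv T W → ∀ x : ∀ v, Ω v,
      marg P (W.biUnion T.C) x * ∏ e ∈ Ew T W, marg P (T.sep e) x
        = ∏ i ∈ W, marg P (T.C i) x := by
  suffices H : ∀ (n : ℕ) (W : Finset T.ι), (Finset.univ \ W).card ≤ n → Conv T W →
      ∀ x : ∀ v, Ω v,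
      marg P (W.biUnion T.C) x * ∏ e ∈ Ew T W, marg P (T.sep e) x
        = ∏ i ∈ W, marg P (T.C i) x by
    intro W hW x
    exact H _ W (le_refl _) hW x
  intro n
  induction n with
  | zero =>
    intro W hcard hW x
    have hWu : W = Finset.univ := by
      have h0 : (Finset.univ \ W) = ∅ := Finset.card_eq_zero.mp (Nat.le_zero.mp hcard)
      have := Finset.sdiff_eq_empty_iff_subset.mp h0
      exact Finset.eq_univ_iff_forall.mpr fun i => this (Finset.mem_univ i)
    subst hWu
    have h1 : Finset.univ.biUnion T.C = (Finset.univ : Finset V) := by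
      refine Finset.eq_univ_iff_forall.mpr fun v => ?_
      obtain ⟨i, hi⟩ := hcov v
      exact Finset.mem_biUnion.mpr ⟨i, Finset.mem_univ i, hi⟩
    have h2 : Ew T Finset.univ = T.edgeFinset := by
      ext e
      rw [mem_Ew]
      exact ⟨fun h => h.1, fun h => ⟨h, fun a _ => Finset.mem_univ a⟩⟩
    rw [h1, h2, marg_univ]
    exact hfac x
  | succ m ih =>
    intro W hcard hW x
    by_cases hWu : W = Finset.univ
    · subst hWu
      have h1 : Finset.univ.biUnion T.C = (Finset.univ : Finset V) := by
        refine Finset.eq_univ_iff_forall.mpr fun v => ?_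
        obtain ⟨i, hi⟩ := hcov v
        exact Finset.mem_biUnion.mpr ⟨i, Finset.mem_univ i, hi⟩
      have h2 : Ew T Finset.univ = T.edgeFinset := by
        ext e
        rw [mem_Ew]
        exact ⟨fun h => h.1, fun h => ⟨h, fun a _ => Finset.mem_univ a⟩⟩
      rw [h1, h2, marg_univ]
      exact hfac x
    -- find a node outside W adjacent to a node in W
    obtain ⟨w0, hw0⟩ := hW.1
    obtain ⟨z, hz⟩ : ∃ z, z ∉ W := by
      by_contra hz
      push_neg at hz
      exact hWu (Finset.eq_univ_iff_forall.mpr hz)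
    obtain ⟨wk⟩ : T.G.Reachable w0 z := T.isTree.isConnected.preconnected w0 z
    obtain ⟨d, -, hdS, hdS'⟩ := wk.exists_boundary_dart (↑W : Set T.ι)
      (by simpa using hw0) (by simpa using hz)
    set nd := d.fst with hnd
    set ℓ := d.snd with hℓ
    have hnW : nd ∈ W := by simpa using hdS
    have hℓW : ℓ ∉ W := by simpa using hdS'
    have hadj : T.G.Adj ℓ nd := d.adj.symm
    -- basic path facts
    have f3 : ∀ m' ∈ W, pth T ℓ m' = SimpleGraph.Walk.cons hadj (pth T nd m') := by
      intro m' hm'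
      refine pth_of_cons hadj ?_
      intro hmem
      exact hℓW (hW.2 nd hnW m' hm' ℓ hmem)
    have f4 : ∀ n' ∈ W, T.G.Adj ℓ n' → n' = nd := by
      intro n' hn' hadj'
      have h1 : (SimpleGraph.Walk.cons hadj' SimpleGraph.Walk.nil).IsPath := by
        refine SimpleGraph.Walk.IsPath.nil.cons ?_
        simp [hadj'.ne]
      have h2 : SimpleGraph.Walk.cons hadj' SimpleGraph.Walk.nil = pth T ℓ n' :=
        pth_unique h1
      rw [f3 n' hn'] at h2
      have hlen : (SimpleGraph.Walk.cons hadj' SimpleGraph.Walk.nil).length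
          = (SimpleGraph.Walk.cons hadj (pth T nd n')).length := by rw [h2]
      simp only [SimpleGraph.Walk.length_cons, SimpleGraph.Walk.length_nil] at hlen
      have hlen0 : (pth T nd n').length = 0 := by omega
      exact (SimpleGraph.Walk.eq_of_length_eq_zero hlen0).symm
    set W' := insert ℓ W with hW'
    have f5 : Conv T W' := by
      refine ⟨⟨ℓ, Finset.mem_insert_self _ _⟩, ?_⟩
      intro i hi j hj y hy
      rcases Finset.mem_insert.mp hi with rfl | hi' 
      · rcases Finset.mem_insert.mp hj with rfl | hj'
        · rw [pth_self] at hy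
          simp only [SimpleGraph.Walk.support_nil, List.mem_singleton] at hy
          subst hy
          exact Finset.mem_insert_self _ _
        · rw [f3 j hj', SimpleGraph.Walk.support_cons] at hy
          rcases List.mem_cons.mp hy with rfl | hy'
          · exact Finset.mem_insert_self _ _
          · exact Finset.mem_insert_of_mem (hW.2 nd hnW j hj' y hy')
      · rcases Finset.mem_insert.mp hj with rfl | hj'
        · rw [pth_reverse, SimpleGraph.Walk.support_reverse, List.mem_reverse] at hy
          rw [f3 i hi', SimpleGraph.Walk.support_cons] at hy
          rcases List.mem_cons.mp hy with rfl | hy'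
          · exact Finset.mem_insert_self _ _
          · exact Finset.mem_insert_of_mem (hW.2 nd hnW i hi' y hy')
        · exact Finset.mem_insert_of_mem (hW.2 i hi' j hj' y hy)
    have hsℓn : s(ℓ, nd) ∉ Ew T W := by
      rw [mem_Ew]
      rintro ⟨-, hall⟩
      exact hℓW (hall ℓ (Sym2.mem_mk_left _ _))
    have f6 : Ew T W' = insert s(ℓ, nd) (Ew T W) := by
      ext e
      induction e with
      | _ a b =>
        rw [mem_Ew, Finset.mem_insert, mem_Ew]
        constructor
        · rintro ⟨he, hab⟩
          have ha := hab a (Sym2.mem_mk_left a b)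
          have hb := hab b (Sym2.mem_mk_right a b)
          have hadjab : T.G.Adj a b := mem_edgeFinset.mp he
          rcases Finset.mem_insert.mp ha with rfl | ha'
          · rcases Finset.mem_insert.mp hb with rfl | hb'
            · exact absurd rfl hadjab.ne
            · left
              rw [f4 b hb' hadjab]
          · rcases Finset.mem_insert.mp hb with rfl | hb'
            · left
              rw [Sym2.eq_swap, f4 a ha' hadjab.symm]
            · right
              refine ⟨he, ?_⟩
              intro y hy
              rcases Sym2.mem_iff.mp hy with rfl | rfl
              · exact ha'
              · exact hb'
        · rintro (he | ⟨he, hab⟩)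
          · rw [he]
            refine ⟨mem_edgeFinset.mpr hadj, ?_⟩
            intro y hy
            rcases Sym2.mem_iff.mp hy with rfl | rfl
            · exact Finset.mem_insert_self _ _
            · exact Finset.mem_insert_of_mem hnW
          · exact ⟨he, fun y hy => Finset.mem_insert_of_mem (hab y hy)⟩
    have f7 : W'.biUnion T.C = T.C ℓ ∪ W.biUnion T.C := Finset.biUnion_insert
    set B := W.biUnion T.C with hB
    set A := W'.biUnion T.C with hA
    have hCB : ∀ i ∈ W, T.C i ⊆ B := fun i hi => Finset.subset_biUnion_of_mem T.C hi
    have hBA : B ⊆ A := by rw [f7]; exact Finset.subset_union_right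
    have f8 : T.C ℓ ∩ B = T.C ℓ ∩ T.C nd := by
      ext v
      simp only [Finset.mem_inter, hB, Finset.mem_biUnion]
      constructor
      · rintro ⟨hv, m', hm', hvm⟩
        refine ⟨hv, ?_⟩
        have hns : nd ∈ (pth T ℓ m').support := by
          rw [f3 m' hm', SimpleGraph.Walk.support_cons]
          exact List.mem_cons_of_mem _ (SimpleGraph.Walk.start_mem_support _)
        exact rip_pth ℓ m' hns (Finset.mem_inter.mpr ⟨hv, hvm⟩)
      · rintro ⟨hv, hvn⟩
        exact ⟨hv, nd, hnW, hvn⟩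
    have hsepB : ∀ e ∈ Ew T W', T.sep e ⊆ B := by
      intro e he
      rw [f6, Finset.mem_insert] at he
      induction e with
      | _ a b =>
        rcases he with heq | he'
        · rw [heq, sep_mk]
          exact Finset.inter_subset_right.trans (hCB nd hnW)
        · rw [sep_mk]
          have hb : b ∈ W := (mem_Ew.mp he').2 b (Sym2.mem_mk_right a b)
          exact Finset.inter_subset_right.trans (hCB b hb)
    -- the inductive hypothesis, applied to W'
    have hIH : ∀ x' : ∀ v, Ω v,
        marg P A x' * ∏ e ∈ Ew T W', marg P (T.sep e) x'
          = marg P (T.C ℓ) x' * ∏ i ∈ W, marg P (T.C i) x' := by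
      intro x'
      have hcard' : (Finset.univ \ W').card ≤ m := by
        have h1 : (Finset.univ \ W).card = Fintype.card T.ι - W.card := by
          rw [Finset.card_sdiff_of_subset (Finset.subset_univ W), Finset.card_univ]
        have h2 : (Finset.univ \ W').card = Fintype.card T.ι - W'.card := by
          rw [Finset.card_sdiff_of_subset (Finset.subset_univ W'), Finset.card_univ]
        have h3 : W'.card = W.card + 1 := Finset.card_insert_of_notMem hℓW
        have h4 : W'.card ≤ Fintype.card T.ι := by
          rw [← Finset.card_univ]
          exact Finset.card_le_card (Finset.subset_univ W')
        omega
      have := ih W' hcard' f5 x'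
      rwa [Finset.prod_insert hℓW] at this
    have hsum : (∑ x' : ∀ v, Ω v, if ∀ v ∈ B, x' v = x v then
          marg P A x' * ∏ e ∈ Ew T W', marg P (T.sep e) x' else 0)
        = ∑ x' : ∀ v, Ω v, if ∀ v ∈ B, x' v = x v then
            marg P (T.C ℓ) x' * ∏ i ∈ W, marg P (T.C i) x' else 0 := by
      refine Finset.sum_congr rfl fun x' _ => ?_
      rw [hIH x']
    have hAuB : A ∪ B = A := Finset.union_eq_left.mpr hBA
    have hAiB : A ∩ B = B := Finset.inter_eq_right.mpr hBA
    have hCuB : T.C ℓ ∪ B = A := f7.symm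
    have hCiB : T.C ℓ ∩ B = T.C ℓ ∩ T.C nd := f8
    -- evaluate the left-hand side of hsum
    have hLHS : (∑ x' : ∀ v, Ω v, if ∀ v ∈ B, x' v = x v then
          marg P A x' * ∏ e ∈ Ew T W', marg P (T.sep e) x' else 0)
        = ((∏ v ∈ Aᶜ, (Fintype.card (Ω v) : ℝ)) * marg P B x)
            * ∏ e ∈ Ew T W', marg P (T.sep e) x := by
      have step : ∀ x' : ∀ v, Ω v, (if ∀ v ∈ B, x' v = x v then
            marg P A x' * ∏ e ∈ Ew T W', marg P (T.sep e) x' else 0)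
          = (if ∀ v ∈ B, x' v = x v then marg P A x' else 0)
              * ∏ e ∈ Ew T W', marg P (T.sep e) x := by
        intro x'
        split_ifs with h
        · congr 1
          refine Finset.prod_congr rfl fun e he => ?_
          exact marg_congr fun v hv => h v (hsepB e he hv)
        · ring
      rw [Finset.sum_congr rfl fun x' _ => step x', ← Finset.sum_mul,
        margsum A B x, hAuB, hAiB]
    -- evaluate the right-hand side of hsum
    have hRHS : (∑ x' : ∀ v, Ω v, if ∀ v ∈ B, x' v = x v then
          marg P (T.C ℓ) x' * ∏ i ∈ W, marg P (T.C i) x' else 0)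
        = ((∏ v ∈ Aᶜ, (Fintype.card (Ω v) : ℝ)) * marg P (T.C ℓ ∩ T.C nd) x)
            * ∏ i ∈ W, marg P (T.C i) x := by
      have step : ∀ x' : ∀ v, Ω v, (if ∀ v ∈ B, x' v = x v then
            marg P (T.C ℓ) x' * ∏ i ∈ W, marg P (T.C i) x' else 0)
          = (if ∀ v ∈ B, x' v = x v then marg P (T.C ℓ) x' else 0)
              * ∏ i ∈ W, marg P (T.C i) x := by
        intro x'
        split_ifs with h
        · congr 1
          refine Finset.prod_congr rfl fun i hi => ?_
          exact marg_congr fun v hv => h v (hCB i hi hv)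
        · ring
      rw [Finset.sum_congr rfl fun x' _ => step x', ← Finset.sum_mul,
        margsum (T.C ℓ) B x, hCuB, hCiB]
    rw [hLHS, hRHS] at hsum
    have hN : (∏ v ∈ Aᶜ, (Fintype.card (Ω v) : ℝ)) ≠ 0 := (prodcard_pos _).ne'
    have hmain : marg P B x * ∏ e ∈ Ew T W', marg P (T.sep e) x
        = marg P (T.C ℓ ∩ T.C nd) x * ∏ i ∈ W, marg P (T.C i) x := by
      apply mul_left_cancel₀ hN
      calc (∏ v ∈ Aᶜ, (Fintype.card (Ω v) : ℝ))
            * (marg P B x * ∏ e ∈ Ew T W', marg P (T.sep e) x)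
          = ((∏ v ∈ Aᶜ, (Fintype.card (Ω v) : ℝ)) * marg P B x)
              * ∏ e ∈ Ew T W', marg P (T.sep e) x := by ring
        _ = ((∏ v ∈ Aᶜ, (Fintype.card (Ω v) : ℝ)) * marg P (T.C ℓ ∩ T.C nd) x)
              * ∏ i ∈ W, marg P (T.C i) x := hsum
        _ = (∏ v ∈ Aᶜ, (Fintype.card (Ω v) : ℝ))
              * (marg P (T.C ℓ ∩ T.C nd) x * ∏ i ∈ W, marg P (T.C i) x) := by ring
    rw [f6, Finset.prod_insert hsℓn, sep_mk] at hmain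
    by_cases hz0 : marg P (T.C ℓ ∩ T.C nd) x = 0
    · have hBzero : marg P B x = 0 :=
        marg_zero_of_subset hP0 (Finset.inter_subset_right.trans (hCB nd hnW)) hz0
      have hnzero : marg P (T.C nd) x = 0 :=
        marg_zero_of_subset hP0 Finset.inter_subset_right hz0
      rw [hBzero, zero_mul]
      exact (Finset.prod_eq_zero hnW hnzero).symm
    · apply mul_left_cancel₀ hz0
      calc marg P (T.C ℓ ∩ T.C nd) x
            * (marg P B x * ∏ e ∈ Ew T W, marg P (T.sep e) x)
          = marg P B x * (marg P (T.C ℓ ∩ T.C nd) x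
              * ∏ e ∈ Ew T W, marg P (T.sep e) x) := by ring
        _ = marg P (T.C ℓ ∩ T.C nd) x * ∏ i ∈ W, marg P (T.C i) x := hmain

end Claim

end CherryAux



namespace CherryAux

open Finset

section Build

variable {V : Type} [DecidableEq V] (T : JTree V) (r : T.ι)

/-- The union of the cluster of `i` and of its parent. -/
noncomputable def uni (i : T.ι) : Finset V := T.C i ∪ T.C (par T r i)

/-- The set of clusters of the next-level cherry tree. -/
noncomputable def US : Finset (Finset V) := (Finset.univ.erase r).image (uni T r)

open Classical in
/-- The set of (child representatives of) edges whose union is `U`. -/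
noncomputable def fib (U : Finset V) : Finset T.ι :=
  (Finset.univ.erase r).filter (fun i => uni T r i = U)

open Classical in
/-- A minimal-depth representative of the fiber of `U`. -/
noncomputable def repU (U : Finset V) : T.ι :=
  if h : (fib T r U).Nonempty then
    (Finset.exists_min_image (fib T r U) (depth T r) h).choose
  else r

/-- The "center": parent of the chosen representative. -/
noncomputable def cenU (U : Finset V) : T.ι := par T r (repU T r U)

variable {T r}

lemma mem_fib {U : Finset V} {i : T.ι} :
    i ∈ fib T r U ↔ i ≠ r ∧ uni T r i = U := by
  classical
  unfold fib
  rw [Finset.mem_filter, Finset.mem_erase]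
  constructor
  · rintro ⟨⟨h1, -⟩, h2⟩; exact ⟨h1, h2⟩
  · rintro ⟨h1, h2⟩; exact ⟨⟨h1, Finset.mem_univ i⟩, h2⟩

lemma mem_US {U : Finset V} : U ∈ US T r ↔ ∃ i, i ≠ r ∧ uni T r i = U := by
  unfold US
  rw [Finset.mem_image]
  constructor
  · rintro ⟨i, hi, he⟩
    exact ⟨i, (Finset.mem_erase.mp hi).1, he⟩
  · rintro ⟨i, hi, he⟩
    exact ⟨i, Finset.mem_erase.mpr ⟨hi, Finset.mem_univ i⟩, he⟩

lemma fib_nonempty {U : Finset V} (hU : U ∈ US T r) : (fib T r U).Nonempty := by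
  obtain ⟨i, hi, he⟩ := mem_US.mp hU
  exact ⟨i, mem_fib.mpr ⟨hi, he⟩⟩

lemma repU_mem {U : Finset V} (hU : U ∈ US T r) : repU T r U ∈ fib T r U := by
  classical
  unfold repU
  rw [dif_pos (fib_nonempty hU)]
  exact (Finset.exists_min_image (fib T r U) (depth T r) (fib_nonempty hU)).choose_spec.1

lemma repU_min {U : Finset V} (hU : U ∈ US T r) :
    ∀ i ∈ fib T r U, depth T r (repU T r U) ≤ depth T r i := by
  classical
  unfold repU
  rw [dif_pos (fib_nonempty hU)]
  exact (Finset.exists_min_image (fib T r U) (depth T r) (fib_nonempty hU)).choose_spec.2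

lemma repU_ne {U : Finset V} (hU : U ∈ US T r) : repU T r U ≠ r :=
  (mem_fib.mp (repU_mem hU)).1

lemma uni_repU {U : Finset V} (hU : U ∈ US T r) : uni T r (repU T r U) = U :=
  (mem_fib.mp (repU_mem hU)).2

lemma depth_repU_pos {U : Finset V} (hU : U ∈ US T r) : 1 ≤ depth T r (repU T r U) := by
  rcases Nat.eq_zero_or_pos (depth T r (repU T r U)) with h | h
  · exact absurd (depth_eq_zero_iff.mp h) (repU_ne hU)
  · exact h

lemma depth_cenU {U : Finset V} (hU : U ∈ US T r) :
    depth T r (cenU T r U) + 1 = depth T r (repU T r U) :=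
  depth_par (repU_ne hU)

lemma card_uni {k : ℕ} (hch : T.IsCherry k) (hk : 1 ≤ k) {i : T.ι} (hi : i ≠ r) :
    (uni T r i).card = k + 1 := by
  have hadj := adj_par (T := T) (r := r) hi
  have h1 := Finset.card_union_add_card_inter (T.C i) (T.C (par T r i))
  rw [hch.1 i, hch.1 (par T r i), hch.2 i (par T r i) hadj] at h1
  unfold uni
  omega

section Leaf

variable {c0 : T.ι} (hrc0 : T.G.Adj r c0) (hc0 : ∀ x, T.G.Adj r x → x = c0)

include hrc0 in
lemma par_c0 : par T r c0 = r :=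
  (anc_adj hrc0 (SimpleGraph.Walk.end_mem_support _)).2

include hrc0 in
lemma depth_c0 : depth T r c0 = 1 := by
  have h1 : depth T r (par T r c0) + 1 = depth T r c0 := depth_par hrc0.ne'
  rw [par_c0 hrc0, depth_r] at h1
  omega

include hrc0 in
lemma support_pth_c0 : (pth T c0 r).support = [c0, r] := by
  rw [support_pth_par hrc0.ne', par_c0 hrc0, pth_self]
  rfl

include hrc0 hc0 in
lemma cen_root {U : Finset V} (hU : U ∈ US T r) (h : cenU T r U = r) :
    U = uni T r c0 := by
  have hadj : T.G.Adj r (repU T r U) := by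
    have := adj_par (T := T) (r := r) (repU_ne hU)
    unfold cenU at h
    rw [h] at this
    exact this.symm
  rw [← uni_repU hU, hc0 _ hadj]

include hrc0 in
lemma root_mem : uni T r c0 ∈ US T r :=
  mem_US.mpr ⟨c0, hrc0.ne', rfl⟩

include hrc0 in
lemma root_cen : cenU T r (uni T r c0) = r := by
  have hU := root_mem hrc0
  have h1 : depth T r (repU T r (uni T r c0)) ≤ 1 := by
    have := repU_min hU c0 (mem_fib.mpr ⟨hrc0.ne', rfl⟩)
    rwa [depth_c0 hrc0] at this
  have h2 := depth_repU_pos hU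
  have h3 := depth_cenU hU
  have h4 : depth T r (cenU T r (uni T r c0)) = 0 := by omega
  exact depth_eq_zero_iff.mp h4

end Leaf

lemma rk_dec {U : Finset V} (hU : U ∈ US T r) (h : cenU T r U ≠ r) :
    depth T r (repU T r (uni T r (cenU T r U))) < depth T r (repU T r U) := by
  have hmem : cenU T r U ∈ fib T r (uni T r (cenU T r U)) := mem_fib.mpr ⟨h, rfl⟩
  have hU' : uni T r (cenU T r U) ∈ US T r := mem_US.mpr ⟨cenU T r U, h, rfl⟩
  have h1 := repU_min hU' _ hmem
  have h2 := depth_cenU hU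
  omega

/-- The separator between `U` and «the union at its center». -/
lemma sep_uni {U : Finset V} (hU : U ∈ US T r) (h : cenU T r U ≠ r) :
    U ∩ uni T r (cenU T r U) = T.C (cenU T r U) := by
  set i := repU T r U with hi
  set c := par T r i with hc
  have hir : i ≠ r := repU_ne hU
  have hcc : cenU T r U = c := rfl
  have hU1 : U = T.C i ∪ T.C c := by rw [← uni_repU hU]; rfl
  have h2 : uni T r c = T.C c ∪ T.C (par T r c) := rfl
  have hsub : T.C i ∩ T.C (par T r c) ⊆ T.C c := by
    have hadj1 : T.G.Adj i c := adj_par hir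
    have hadj2 : T.G.Adj c (par T r c) := adj_par (hcc ▸ h)
    have hdi : depth T r c + 1 = depth T r i := depth_par hir
    have hdc : depth T r (par T r c) + 1 = depth T r c := depth_par (hcc ▸ h)
    have hipc : i ≠ par T r c := by
      intro he
      rw [he] at hdi
      omega
    have hw : (SimpleGraph.Walk.cons hadj1
        (SimpleGraph.Walk.cons hadj2 SimpleGraph.Walk.nil)).IsPath := by
      rw [SimpleGraph.Walk.cons_isPath_iff]
      constructor
      · rw [SimpleGraph.Walk.cons_isPath_iff]
        refine ⟨SimpleGraph.Walk.IsPath.nil, ?_⟩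
        simp only [SimpleGraph.Walk.support_nil, List.mem_singleton]
        exact hadj2.ne
      · simp only [SimpleGraph.Walk.support_cons, SimpleGraph.Walk.support_nil,
          List.mem_cons, List.mem_singleton, not_or]
        exact ⟨hadj1.ne, hipc, List.not_mem_nil⟩
    exact T.rip i (par T r c) _ hw c (by
      simp only [SimpleGraph.Walk.support_cons, SimpleGraph.Walk.support_nil,
        List.mem_cons, List.mem_singleton]
      tauto)
  have hgoal : U ∩ uni T r c = T.C c := by
    rw [hU1, h2]
    ext v
    simp only [Finset.mem_inter, Finset.mem_union]
    constructor
    · rintro ⟨h1 | h1, h3 | h3⟩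
      · exact h3
      · exact hsub (Finset.mem_inter.mpr ⟨h1, h3⟩)
      · exact h1
      · exact h1
    · intro h
      exact ⟨Or.inr h, Or.inl h⟩
  rw [hcc]
  exact hgoal

end Build

end CherryAux



namespace CherryAux

open Finset

section Build2

variable {V : Type} [Fintype V] [DecidableEq V] {T : JTree V} {r : T.ι}

lemma conv_star {z : T.ι} {W : Finset T.ι} (hz : z ∈ W)
    (hadjall : ∀ a ∈ W, a = z ∨ T.G.Adj z a) : Conv T W := by
  refine ⟨⟨z, hz⟩, ?_⟩
  intro i hi j hj y hy
  by_cases hij : i = j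
  · subst hij
    rw [pth_self] at hy
    simp only [SimpleGraph.Walk.support_nil, List.mem_singleton] at hy
    subst hy
    exact hi
  rcases hadjall i hi with rfl | hzi
  · -- i = z
    have hzj : T.G.Adj i j := by
      rcases hadjall j hj with rfl | h
      · exact absurd rfl hij
      · exact h
    have hpth : pth T i j = SimpleGraph.Walk.cons hzj SimpleGraph.Walk.nil := by
      refine (pth_unique ?_).symm
      refine SimpleGraph.Walk.IsPath.nil.cons ?_
      simp [hzj.ne]
    rw [hpth] at hy
    simp only [SimpleGraph.Walk.support_cons, SimpleGraph.Walk.support_nil,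
      List.mem_cons, List.mem_singleton] at hy
    rcases hy with rfl | rfl | h
    · exact hi
    · exact hj
    · exact absurd h List.not_mem_nil
  rcases hadjall j hj with rfl | hzj
  · -- j = z
    have hpth : pth T i j = SimpleGraph.Walk.cons hzi.symm SimpleGraph.Walk.nil := by
      refine (pth_unique ?_).symm
      refine SimpleGraph.Walk.IsPath.nil.cons ?_
      simp [hzi.ne']
    rw [hpth] at hy
    simp only [SimpleGraph.Walk.support_cons, SimpleGraph.Walk.support_nil,
      List.mem_cons, List.mem_singleton] at hy
    rcases hy with rfl | rfl | h
    · exact hi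
    · exact hj
    · exact absurd h List.not_mem_nil
  · -- both adjacent to z
    have hpth : pth T i j = SimpleGraph.Walk.cons hzi.symm
        (SimpleGraph.Walk.cons hzj SimpleGraph.Walk.nil) := by
      refine (pth_unique ?_).symm
      rw [SimpleGraph.Walk.cons_isPath_iff]
      constructor
      · refine SimpleGraph.Walk.IsPath.nil.cons ?_
        simp [hzj.ne]
      · simp only [SimpleGraph.Walk.support_cons, SimpleGraph.Walk.support_nil,
          List.mem_cons, List.mem_singleton, not_or]
        exact ⟨fun h => hzi.ne h.symm, hij, List.not_mem_nil⟩
    rw [hpth] at hy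
    simp only [SimpleGraph.Walk.support_cons, SimpleGraph.Walk.support_nil,
      List.mem_cons, List.mem_singleton] at hy
    rcases hy with rfl | rfl | rfl | h
    · exact hi
    · exact hz
    · exact hj
    · exact absurd h List.not_mem_nil

lemma share {U : Finset V} {i i' : T.ι} (hi : i ∈ fib T r U) (hi' : i' ∈ fib T r U) :
    i = i' ∨ i = par T r i' ∨ par T r i = i' ∨ par T r i = par T r i' := by
  by_contra hcon
  push_neg at hcon
  obtain ⟨h1, h2, h3, h4⟩ := hcon
  obtain ⟨hir, hu⟩ := mem_fib.mp hi
  obtain ⟨hir', hu'⟩ := mem_fib.mp hi'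
  have hCsub : T.C i ⊆ T.C i' ∪ T.C (par T r i') := by
    have : T.C i ⊆ uni T r i := Finset.subset_union_left
    rw [hu, ← hu'] at this
    exact this
  have hadj' : T.G.Adj i' (par T r i') := adj_par hir'
  rcases adj_or_mem (T := T) hadj' (x := i) with hm | hm
  · have hsub : T.C i ∩ T.C i' ⊆ T.C (par T r i') := rip_pth i i' hm
    have : T.C i ⊆ T.C (par T r i') := by
      intro v hv
      rcases Finset.mem_union.mp (hCsub hv) with h | h
      · exact hsub (Finset.mem_inter.mpr ⟨hv, h⟩)
      · exact h
    exact T.noSub i (par T r i') h2 this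
  · have hsub : T.C i ∩ T.C (par T r i') ⊆ T.C i' := rip_pth i (par T r i') hm
    have : T.C i ⊆ T.C i' := by
      intro v hv
      rcases Finset.mem_union.mp (hCsub hv) with h | h
      · exact h
      · exact hsub (Finset.mem_inter.mpr ⟨hv, h⟩)
    exact T.noSub i i' h1 this

lemma dich {U : Finset V} (hU : U ∈ US T r) :
    (∀ i ∈ fib T r U, par T r i = cenU T r U)
      ∨ (∀ i ∈ fib T r U, i = repU T r U ∨ par T r i = repU T r U) := by
  have hqfib : repU T r U ∈ fib T r U := repU_mem hU
  have hqr : repU T r U ≠ r := repU_ne hU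
  have hdq : depth T r (cenU T r U) + 1 = depth T r (repU T r U) := depth_cenU hU
  have hmin := repU_min hU
  by_cases hex : ∃ x ∈ fib T r U, par T r x = repU T r U
  · right
    obtain ⟨x, hx, hpx⟩ := hex
    have hdx : depth T r x = depth T r (repU T r U) + 1 := by
      have := depth_par (mem_fib.mp hx).1
      rw [hpx] at this
      omega
    intro y hy
    have hyr := (mem_fib.mp hy).1
    have hdy := depth_par hyr
    rcases share hy hqfib with h | h | h | h
    · exact Or.inl h
    · -- y = cen: depth too small
      exfalso
      have h5 := hmin y hy
      have h6 : depth T r y + 1 = depth T r (repU T r U) := by rw [h]; exact hdq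
      omega
    · exact Or.inr h
    · -- par y = cen; contradiction via x unless y = rep
      by_cases hyq : y = repU T r U
      · exact Or.inl hyq
      exfalso
      rcases share hx hy with e | e | e | e
      · -- x = y
        have h7 : par T r x = cenU T r U := by rw [e]; exact h
        rw [hpx] at h7
        have h8 := congrArg (depth T r) h7
        omega
      · -- x = par y = cen
        have h9 : x = cenU T r U := by rw [e]; exact h
        have h10 := congrArg (depth T r) h9
        omega
      · -- par x = y, but par x = rep
        exact hyq (e.symm.trans hpx).symm.symm
      · -- par x = par y : rep = cen
        have h11 : repU T r U = cenU T r U := by rw [← hpx, e]; exact h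
        have h12 := congrArg (depth T r) h11
        omega
  · left
    intro y hy
    have hyr := (mem_fib.mp hy).1
    rcases share hy hqfib with h | h | h | h
    · rw [h]; rfl
    · -- y = cen: depth contradiction
      exfalso
      have h5 := hmin y hy
      have h6 : depth T r y + 1 = depth T r (repU T r U) := by rw [h]; exact hdq
      omega
    · exact absurd ⟨y, hy, h⟩ hex
    · exact h

/-- The block associated with a next-level node. -/
noncomputable def blk (T : JTree V) (r : T.ι) (U : Finset V) : Finset T.ι :=
  insert (cenU T r U) (fib T r U)

lemma cen_not_fib {U : Finset V} (hU : U ∈ US T r) : cenU T r U ∉ fib T r U := by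
  intro h
  have := repU_min hU _ h
  have := depth_cenU hU
  omega

lemma blk_conv {U : Finset V} (hU : U ∈ US T r) : Conv T (blk T r U) := by
  rcases dich hU with hd | hd
  · refine conv_star (Finset.mem_insert_self _ _) ?_
    intro a ha
    rcases Finset.mem_insert.mp ha with rfl | ha'
    · exact Or.inl rfl
    · right
      have := adj_par (mem_fib.mp ha').1
      rw [hd a ha'] at this
      exact this.symm
  · refine conv_star (z := repU T r U)
      (Finset.mem_insert_of_mem (repU_mem hU)) ?_
    intro a ha
    rcases Finset.mem_insert.mp ha with rfl | ha'
    · exact Or.inr (adj_par (repU_ne hU))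
    · rcases hd a ha' with rfl | h
      · exact Or.inl rfl
      · right
        have := adj_par (mem_fib.mp ha').1
        rw [h] at this
        exact this.symm

lemma edge_inj {i j : T.ι} (hi : i ≠ r) (hj : j ≠ r)
    (h : s(i, par T r i) = s(j, par T r j)) : i = j := by
  rw [Sym2.eq_iff] at h
  rcases h with ⟨h1, -⟩ | ⟨h1, h2⟩
  · exact h1
  · exfalso
    have d1 := depth_par hi
    have d2 := depth_par hj
    have d3 := congrArg (depth T r) h1
    have d4 := congrArg (depth T r) h2
    omega

lemma edge_enum : T.edgeFinset = (Finset.univ.erase r).image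
    (fun i => s(i, par T r i)) := by
  ext e
  induction e with
  | _ a b =>
    rw [mem_edgeFinset, Finset.mem_image]
    constructor
    · intro h
      rcases parent_or h with ⟨ha, hp⟩ | ⟨hb, hp⟩
      · exact ⟨a, Finset.mem_erase.mpr ⟨ha, Finset.mem_univ a⟩, by rw [hp]⟩
      · exact ⟨b, Finset.mem_erase.mpr ⟨hb, Finset.mem_univ b⟩, by rw [hp, Sym2.eq_swap]⟩
    · rintro ⟨i, hi, he⟩
      have hadj : T.G.Adj i (par T r i) := adj_par (Finset.mem_erase.mp hi).1
      have := mem_edgeFinset.mpr hadj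
      rwa [he, mem_edgeFinset] at this

lemma blk_biUnion {U : Finset V} (hU : U ∈ US T r) :
    (blk T r U).biUnion T.C = U := by
  ext v
  rw [Finset.mem_biUnion]
  constructor
  · rintro ⟨j, hj, hv⟩
    rcases Finset.mem_insert.mp hj with rfl | hj'
    · have hsub : T.C (cenU T r U) ⊆ uni T r (repU T r U) := Finset.subset_union_right
      rw [uni_repU hU] at hsub
      exact hsub hv
    · have hsub : T.C j ⊆ uni T r j := Finset.subset_union_left
      rw [(mem_fib.mp hj').2] at hsub
      exact hsub hv
  · intro hv
    have hv' : v ∈ uni T r (repU T r U) := by rw [uni_repU hU]; exact hv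
    rcases Finset.mem_union.mp hv' with h | h
    · exact ⟨repU T r U, Finset.mem_insert_of_mem (repU_mem hU), h⟩
    · exact ⟨cenU T r U, Finset.mem_insert_self _ _, h⟩

lemma Ew_blk {U : Finset V} (hU : U ∈ US T r) :
    Ew T (blk T r U) = (fib T r U).image (fun i => s(i, par T r i)) := by
  ext e
  induction e with
  | _ a b =>
    rw [mem_Ew, Finset.mem_image]
    constructor
    · rintro ⟨he, hab⟩
      have ha := hab a (Sym2.mem_mk_left a b)
      have hb := hab b (Sym2.mem_mk_right a b)
      have hadj : T.G.Adj a b := mem_edgeFinset.mp he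
      have main : ∀ x y : T.ι, x ∈ blk T r U → y ∈ blk T r U → x ≠ r →
          par T r x = y → x ∈ fib T r U := by
        intro x y hx hy hxr hpxy
        rcases Finset.mem_insert.mp hx with hxc | hxf
        · exfalso
          -- x = cen, y = par cen ∈ blk: depth contradiction
          rcases Finset.mem_insert.mp hy with hyc | hyf
          · rw [hxc] at hpxy
            rw [hyc] at hpxy
            have := depth_par (show cenU T r U ≠ r from hxc ▸ hxr)
            rw [hpxy] at this
            omega
          · have h1 := repU_min hU _ hyf
            have h2 := depth_cenU hU
            have h3 : depth T r y + 1 = depth T r x := by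
              rw [← hpxy]
              exact depth_par hxr
            rw [hxc] at h3
            omega
        · exact hxf
      rcases parent_or hadj with ⟨har, hp⟩ | ⟨hbr, hp⟩
      · exact ⟨a, main a b ha hb har hp, by rw [hp]⟩
      · exact ⟨b, main b a hb ha hbr hp, by rw [hp, Sym2.eq_swap]⟩
    · rintro ⟨i, hi, he⟩
      have hir := (mem_fib.mp hi).1
      have hadj : T.G.Adj i (par T r i) := adj_par hir
      have hparblk : par T r i ∈ blk T r U := by
        rcases dich hU with hd | hd
        · rw [hd i hi]
          exact Finset.mem_insert_self _ _
        · rcases hd i hi with rfl | h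
          · exact Finset.mem_insert_self _ _
          · rw [h]
            exact Finset.mem_insert_of_mem (repU_mem hU)
      refine ⟨?_, ?_⟩
      · have h2 := mem_edgeFinset.mpr hadj
        rwa [he] at h2
      · intro y hy
        rw [← he] at hy
        rcases Sym2.mem_iff.mp hy with rfl | rfl
        · exact Finset.mem_insert_of_mem hi
        · exact hparblk

end Build2

end CherryAux



namespace CherryAux

open Finset

section Build3

variable {V : Type} [Fintype V] [DecidableEq V]

/-- The parent operation on next-level nodes. -/
noncomputable def parQ (T : JTree V) (r : T.ι) (X : {U // U ∈ US T r}) :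
    {U // U ∈ US T r} :=
  if h : cenU T r X.val = r then X
  else ⟨uni T r (cenU T r X.val), mem_US.mpr ⟨cenU T r X.val, h, rfl⟩⟩

/-- The rank of a next-level node. -/
noncomputable def rkQ (T : JTree V) (r : T.ι) (X : {U // U ∈ US T r}) : ℕ :=
  depth T r (repU T r X.val)

variable {T : JTree V} {r c0 : T.ι}

lemma parQ_eq_of_ne {X : {U // U ∈ US T r}} (h : cenU T r X.val ≠ r) :
    parQ T r X = ⟨uni T r (cenU T r X.val), mem_US.mpr ⟨cenU T r X.val, h, rfl⟩⟩ := by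
  unfold parQ
  rw [dif_neg h]

lemma parQ_val_of_ne {X : {U // U ∈ US T r}} (h : cenU T r X.val ≠ r) :
    (parQ T r X).val = uni T r (cenU T r X.val) := by
  rw [parQ_eq_of_ne h]

section WithLeaf

variable (hrc0 : T.G.Adj r c0) (hc0 : ∀ x, T.G.Adj r x → x = c0)

/-- The root of the next-level tree. -/
noncomputable def rootQ (T : JTree V) (r c0 : T.ι) (h : c0 ≠ r) : {U // U ∈ US T r} :=
  ⟨uni T r c0, mem_US.mpr ⟨c0, h, rfl⟩⟩

include hrc0 in
lemma parQ_root : parQ T r (rootQ T r c0 hrc0.ne') = rootQ T r c0 hrc0.ne' := by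
  unfold parQ
  split_ifs with h
  · rfl
  · exact absurd (root_cen hrc0) h

include hrc0 hc0 in
lemma eq_root_of_cen {X : {U // U ∈ US T r}} (h : cenU T r X.val = r) :
    X = rootQ T r c0 hrc0.ne' :=
  Subtype.ext (cen_root hrc0 hc0 X.2 h)

include hrc0 hc0 in
lemma cen_ne_of_ne_root {X : {U // U ∈ US T r}} (h : X ≠ rootQ T r c0 hrc0.ne') :
    cenU T r X.val ≠ r :=
  fun hc => h (eq_root_of_cen hrc0 hc0 hc)

include hrc0 hc0 in
lemma rkQ_lt {X : {U // U ∈ US T r}} (h : X ≠ rootQ T r c0 hrc0.ne') :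
    rkQ T r (parQ T r X) < rkQ T r X := by
  have hne := cen_ne_of_ne_root hrc0 hc0 h
  rw [parQ_eq_of_ne hne]
  exact rk_dec X.2 hne

include hrc0 in
lemma sepQ {X : {U // U ∈ US T r}} (hne : cenU T r X.val ≠ r) :
    X.val ∩ (parQ T r X).val = T.C (cenU T r X.val) := by
  rw [parQ_val_of_ne hne]
  exact sep_uni X.2 hne

end WithLeaf

end Build3

end CherryAux



namespace CherryAux

open Finset

section Build4

variable {V : Type} [Fintype V] [DecidableEq V] {T : JTree V} {r : T.ι}

lemma prod_fib {M : Type} [CommMonoid M] (h : T.ι → M) :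
    ∏ U ∈ US T r, ∏ i ∈ fib T r U, h i = ∏ i ∈ Finset.univ.erase r, h i := by
  classical
  exact Finset.prod_fiberwise_of_maps_to (fun i hi => Finset.mem_image_of_mem _ hi) h

lemma pgraph_edgeFinset {α : Type} [Fintype α] [DecidableEq α] {par : α → α} {ρ : α}
    {rk : α → ℕ} (hrk : ∀ x, x ≠ ρ → rk (par x) < rk x) :
    Set.Finite.toFinset (Set.toFinite (pgraph par ρ).edgeSet)
      = (Finset.univ.erase ρ).image (fun x => s(x, par x)) := by
  ext e
  rw [Set.Finite.mem_toFinset, pgraph_edgeSet hrk]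
  simp only [Set.mem_iUnion, Set.mem_singleton_iff, Set.mem_setOf_eq, Finset.mem_image,
    Finset.mem_erase]
  constructor
  · rintro ⟨x, hx, he⟩
    exact ⟨x, ⟨hx, Finset.mem_univ x⟩, he.symm⟩
  · rintro ⟨x, ⟨hx, -⟩, he⟩
    exact ⟨x, hx, he.symm⟩

end Build4

end CherryAux

open CherryAux in
/-- a probability mass function on a finite product that factorizes
according to some `k`-order cherry tree on `V` (with `|V| ≥ k + 1`) also factorizes
according to some `(k+1)`-order cherry tree on `V`. -/
theorem cherry_tree_pmf_extends_to_higher_order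
    {V : Type} [Fintype V] [DecidableEq V] (k : ℕ)
    {Ω : V → Type} [∀ v, Fintype (Ω v)] [∀ v, Nonempty (Ω v)]
    (hV : k + 1 ≤ Fintype.card V)
    (P : (∀ v, Ω v) → ℝ) (hP0 : ∀ y, 0 ≤ P y) (hP1 : ∑ y : ∀ v, Ω v, P y = 1)
    (T : JTree V) (hcov : T.CoversAll) (hch : T.IsCherry k)
    (hfac : Factorizes T P) :
    ∃ T' : JTree V, T'.CoversAll ∧ T'.IsCherry (k + 1) ∧ Factorizes T' P := by
  classical
  -- k must be positive
  rcases Nat.eq_zero_or_pos k with hk0 | hk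
  · exfalso
    have hVpos : 0 < Fintype.card V := by omega
    obtain ⟨v⟩ := Fintype.card_pos_iff.mp hVpos
    obtain ⟨i, hi⟩ := hcov v
    have hc := hch.1 i
    rw [hk0, Finset.card_eq_zero] at hc
    rw [hc] at hi
    exact absurd hi (Finset.notMem_empty v)
  -- there are at least two nodes
  have hex : ∃ a b : T.ι, a ≠ b := by
    by_contra hno
    push_neg at hno
    obtain ⟨i0⟩ : Nonempty T.ι := T.isTree.isConnected.nonempty
    have hsub : (Finset.univ : Finset V) ⊆ T.C i0 := by
      intro v _
      obtain ⟨i, hi⟩ := hcov v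
      rwa [hno i i0] at hi
    have hcard := Finset.card_le_card hsub
    rw [Finset.card_univ, hch.1 i0] at hcard
    omega
  obtain ⟨r, c0, hrc0, hc0⟩ := exists_leaf T hex
  set ρ : {U // U ∈ US T r} := rootQ T r c0 hrc0.ne' with hρdef
  have hrkQ : ∀ X : {U // U ∈ US T r}, X ≠ ρ → rkQ T r (parQ T r X) < rkQ T r X :=
    fun X hX => rkQ_lt hrc0 hc0 hX
  have htree : (pgraph (parQ T r) ρ).IsTree :=
    pgraph_isTree (parQ_root hrc0) hrkQ
  have hval_card : ∀ X : {U // U ∈ US T r}, X.val.card = k + 1 := by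
    intro X
    rw [← uni_repU X.2]
    exact card_uni hch hk (repU_ne X.2)
  have hρval : ρ.val = T.C c0 ∪ T.C r := by
    show uni T r c0 = _
    unfold uni
    rw [par_c0 hrc0]
  -- running intersection data for the new tree
  have hbad_i : ∀ (v : V) (X : {U // U ∈ US T r}), v ∈ X.val → X ≠ ρ →
      v ∉ (parQ T r X).val →
      v ∈ T.C (repU T r X.val) ∧ v ∉ T.C (par T r (repU T r X.val)) := by
    intro v X hvX hXρ hvp
    have hne := cen_ne_of_ne_root hrc0 hc0 hXρ
    have hcen_sub : T.C (cenU T r X.val) ⊆ (parQ T r X).val := by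
      rw [parQ_val_of_ne hne]
      exact Finset.subset_union_left
    have hvcen : v ∉ T.C (cenU T r X.val) := fun h => hvp (hcen_sub h)
    have hvX' : v ∈ T.C (repU T r X.val) ∪ T.C (cenU T r X.val) := by
      have h2 : X.val = uni T r (repU T r X.val) := (uni_repU X.2).symm
      rw [h2] at hvX
      exact hvX
    rcases Finset.mem_union.mp hvX' with h | h
    · exact ⟨h, hvcen⟩
    · exact absurd h hvcen
  have hbad_uniq : ∀ (v : V) (X Y : {U // U ∈ US T r}),
      (X ≠ ρ ∧ v ∈ X.val ∧ v ∉ (parQ T r X).val) →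
      (Y ≠ ρ ∧ v ∈ Y.val ∧ v ∉ (parQ T r Y).val) → X = Y := by
    intro v X Y hX hY
    obtain ⟨c1, c1'⟩ := hbad_i v X hX.2.1 hX.1 hX.2.2
    obtain ⟨c2, c2'⟩ := hbad_i v Y hY.2.1 hY.1 hY.2.2
    have m1 : repU T r X.val ∈ (pth T (repU T r Y.val) r).support :=
      k1 (repU_ne X.2) c1 c1' c2
    have m2 : repU T r Y.val ∈ (pth T (repU T r X.val) r).support :=
      k1 (repU_ne Y.2) c2 c2' c1
    obtain ⟨n, hn, hd⟩ := mem_pth_root m1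
    obtain ⟨n', hn', hd'⟩ := mem_pth_root m2
    have hn0 : n = 0 := by omega
    rw [hn0] at hn
    simp only [Function.iterate_zero, id] at hn
    have hXY : X.val = Y.val := by
      rw [← uni_repU X.2, ← uni_repU Y.2, hn]
    exact Subtype.ext hXY
  have hbad_root : ∀ (v : V) (X : {U // U ∈ US T r}),
      (X ≠ ρ ∧ v ∈ X.val ∧ v ∉ (parQ T r X).val) → v ∉ ρ.val := by
    intro v X hX hvρ
    obtain ⟨c1, c1'⟩ := hbad_i v X hX.2.1 hX.1 hX.2.2
    rw [hρval] at hvρ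
    rcases Finset.mem_union.mp hvρ with h | h
    · have m := k1 (repU_ne X.2) c1 c1' h
      rw [support_pth_c0 hrc0] at m
      rcases List.mem_cons.mp m with he | he
      · have hXv : X.val = ρ.val := by rw [← uni_repU X.2, he]; rfl
        exact hX.1 (Subtype.ext hXv)
      · simp only [List.mem_singleton] at he
        exact absurd he (repU_ne X.2)
    · have m := k1 (repU_ne X.2) c1 c1' h
      rw [pth_self] at m
      simp only [SimpleGraph.Walk.support_nil, List.mem_singleton] at m
      exact absurd m (repU_ne X.2)
  have hrip : ∀ (X Y : {U // U ∈ US T r}) (p : (pgraph (parQ T r) ρ).Walk X Y),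
      p.IsPath → ∀ Z ∈ p.support, X.val ∩ Y.val ⊆ Z.val := by
    intro X Y p hp Z hZ v hv
    rw [Finset.mem_inter] at hv
    obtain ⟨tv, htv_bad, htv_ρ⟩ : ∃ tv : {U // U ∈ US T r},
        (∀ W, (W ≠ ρ ∧ v ∈ W.val ∧ v ∉ (parQ T r W).val) → W = tv) ∧
        (v ∈ ρ.val → ρ = tv) := by
      by_cases hbex : ∃ W, W ≠ ρ ∧ v ∈ W.val ∧ v ∉ (parQ T r W).val
      · obtain ⟨B, hB⟩ := hbex
        exact ⟨B, fun W hW => hbad_uniq v W B hW hB,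
          fun hρv => absurd hρv (hbad_root v B hB)⟩
      · exact ⟨ρ, fun W hW => (hbex ⟨W, hW⟩).elim, fun _ => rfl⟩
    have hchain : ∀ (n : ℕ) (W : {U // U ∈ US T r}), rkQ T r W ≤ n → v ∈ W.val →
        ∃ w : (pgraph (parQ T r) ρ).Walk W tv, ∀ y ∈ w.support, v ∈ y.val := by
      intro n
      induction n with
      | zero =>
        intro W hrkW hvW
        by_cases hWtv : W = tv
        · subst hWtv
          refine ⟨SimpleGraph.Walk.nil, ?_⟩
          intro y hy
          simp only [SimpleGraph.Walk.support_nil, List.mem_singleton] at hy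
          subst hy
          exact hvW
        · exfalso
          have hWρ : W ≠ ρ := by
            rintro rfl
            exact hWtv (htv_ρ hvW)
          have hvpar : v ∈ (parQ T r W).val := by
            by_contra hvp
            exact hWtv (htv_bad W ⟨hWρ, hvW, hvp⟩)
          have hlt := hrkQ W hWρ
          omega
      | succ m ih =>
        intro W hrkW hvW
        by_cases hWtv : W = tv
        · subst hWtv
          refine ⟨SimpleGraph.Walk.nil, ?_⟩
          intro y hy
          simp only [SimpleGraph.Walk.support_nil, List.mem_singleton] at hy
          subst hy
          exact hvW
        · have hWρ : W ≠ ρ := by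
            rintro rfl
            exact hWtv (htv_ρ hvW)
          have hvpar : v ∈ (parQ T r W).val := by
            by_contra hvp
            exact hWtv (htv_bad W ⟨hWρ, hvW, hvp⟩)
          have hlt := hrkQ W hWρ
          obtain ⟨w', hw'⟩ := ih (parQ T r W) (by omega) hvpar
          refine ⟨SimpleGraph.Walk.cons (pgraph_adj_parent hrkQ hWρ) w', ?_⟩
          intro y hy
          rw [SimpleGraph.Walk.support_cons] at hy
          rcases List.mem_cons.mp hy with rfl | hy'
          · exact hvW
          · exact hw' y hy'
    obtain ⟨wX, hwX⟩ := hchain _ X le_rfl hv.1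
    obtain ⟨wY, hwY⟩ := hchain _ Y le_rfl hv.2
    have hbp := (wX.append wY.reverse).bypass_isPath
    obtain ⟨q0, hq0, huniq⟩ := htree.existsUnique_path X Y
    have he1 : p = (wX.append wY.reverse).bypass := by
      rw [huniq p hp, huniq _ hbp]
    have hZ2 : Z ∈ (wX.append wY.reverse).support :=
      SimpleGraph.Walk.support_bypass_subset _ (he1 ▸ hZ)
    rw [SimpleGraph.Walk.mem_support_append_iff] at hZ2
    rcases hZ2 with h | h
    · exact hwX Z h
    · rw [SimpleGraph.Walk.support_reverse, List.mem_reverse] at h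
      exact hwY Z h
  have hnoSub : ∀ X Y : {U // U ∈ US T r}, X ≠ Y → ¬ X.val ⊆ Y.val := by
    intro X Y hne hsub
    have h1 := hval_card X
    have h2 := hval_card Y
    have hXY : X.val = Y.val := Finset.eq_of_subset_of_card_le hsub (by omega)
    exact hne (Subtype.ext hXY)
  let Q : JTree V :=
    { ι := {U // U ∈ US T r},
      G := pgraph (parQ T r) ρ,
      isTree := htree,
      C := fun X => X.val,
      noSub := hnoSub,
      rip := hrip }
  refine ⟨Q, ?_, ?_, ?_⟩
  · -- CoversAll
    intro v
    obtain ⟨i, hi⟩ := hcov v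
    by_cases hir : i = r
    · refine ⟨ρ, ?_⟩
      show v ∈ ρ.val
      rw [hρval]
      exact Finset.mem_union_right _ (hir ▸ hi)
    · refine ⟨⟨uni T r i, mem_US.mpr ⟨i, hir, rfl⟩⟩, ?_⟩
      show v ∈ uni T r i
      exact Finset.mem_union_left _ hi
  · -- IsCherry (k+1)
    constructor
    · intro X
      exact hval_card X
    · intro X Y hadj
      have hadj' : (pgraph (parQ T r) ρ).Adj X Y := hadj
      rw [pgraph_adj_iff] at hadj'
      obtain ⟨hne, h | h⟩ := hadj'
      · obtain ⟨hXρ, hpar⟩ := h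
        have hcne := cen_ne_of_ne_root hrc0 hc0 hXρ
        show (X.val ∩ Y.val).card = k + 1 - 1
        rw [← hpar, sepQ hrc0 hcne, hch.1]
        omega
      · obtain ⟨hYρ, hpar⟩ := h
        have hcne := cen_ne_of_ne_root hrc0 hc0 hYρ
        show (X.val ∩ Y.val).card = k + 1 - 1
        rw [Finset.inter_comm, ← hpar, sepQ hrc0 hcne, hch.1]
        omega
  · -- Factorizes
    intro x
    have hinj : ∀ a ∈ Finset.univ.erase ρ, ∀ b ∈ Finset.univ.erase ρ,
        s(a, parQ T r a) = s(b, parQ T r b) → a = b := fun a ha b hb h =>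
      pgraph_edge_mk_inj hrkQ (Finset.mem_erase.mp ha).1 (Finset.mem_erase.mp hb).1 h
    have hQefin : Q.edgeFinset
        = (Finset.univ.erase ρ).image (fun X => s(X, parQ T r X)) :=
      pgraph_edgeFinset hrkQ
    have hsepconv : ∀ X ∈ Finset.univ.erase ρ,
        marg P (Q.sep s(X, parQ T r X)) x = marg P (T.C (cenU T r X.val)) x := by
      intro X hX
      have hXρ : X ≠ ρ := (Finset.mem_erase.mp hX).1
      have hc := cen_ne_of_ne_root hrc0 hc0 hXρ
      have h1 : Q.sep s(X, parQ T r X) = X.val ∩ (parQ T r X).val := rfl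
      rw [h1, sepQ hrc0 hc]
    have hinjT : ∀ a ∈ Finset.univ.erase r, ∀ b ∈ Finset.univ.erase r,
        s(a, par T r a) = s(b, par T r b) → a = b := fun a ha b hb h =>
      edge_inj (Finset.mem_erase.mp ha).1 (Finset.mem_erase.mp hb).1 h
    have hTedge : ∏ e ∈ T.edgeFinset, marg P (T.sep e) x
        = ∏ i ∈ Finset.univ.erase r, marg P (T.C i ∩ T.C (par T r i)) x := by
      rw [edge_enum (r := r), Finset.prod_image hinjT]
      exact Finset.prod_congr rfl fun i _ => by rw [sep_mk]
    have hPx := hfac x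
    rw [hTedge] at hPx
    have hblk : ∀ X : {U // U ∈ US T r},
        marg P X.val x * ∏ i ∈ fib T r X.val, marg P (T.C i ∩ T.C (par T r i)) x
          = marg P (T.C (cenU T r X.val)) x
              * ∏ i ∈ fib T r X.val, marg P (T.C i) x := by
      intro X
      have h1 := claim_eq hP0 hcov hfac (blk T r X.val) (blk_conv X.2) x
      have hinj2 : ∀ a ∈ fib T r X.val, ∀ b ∈ fib T r X.val,
          s(a, par T r a) = s(b, par T r b) → a = b := fun a ha b hb h =>
        edge_inj (mem_fib.mp ha).1 (mem_fib.mp hb).1 h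
      rw [blk_biUnion X.2, Ew_blk X.2, Finset.prod_image hinj2] at h1
      rw [show blk T r X.val = insert (cenU T r X.val) (fib T r X.val) from rfl,
        Finset.prod_insert (cen_not_fib X.2)] at h1
      have hconv : ∏ i ∈ fib T r X.val, marg P (T.sep s(i, par T r i)) x
          = ∏ i ∈ fib T r X.val, marg P (T.C i ∩ T.C (par T r i)) x :=
        Finset.prod_congr rfl fun i _ => by rw [sep_mk]
      rw [hconv] at h1
      exact h1
    have hfibs : ∀ (h : T.ι → ℝ),
        (∏ X : {U // U ∈ US T r}, ∏ i ∈ fib T r X.val, h i)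
          = ∏ i ∈ Finset.univ.erase r, h i := by
      intro h
      rw [← Finset.prod_subtype (US T r) (fun U => Iff.rfl)
        (fun U => ∏ i ∈ fib T r U, h i)]
      exact prod_fib h
    have hall : (∏ X : {U // U ∈ US T r}, marg P X.val x)
          * ∏ i ∈ Finset.univ.erase r, marg P (T.C i ∩ T.C (par T r i)) x
        = (∏ X : {U // U ∈ US T r}, marg P (T.C (cenU T r X.val)) x)
            * ∏ i ∈ Finset.univ.erase r, marg P (T.C i) x := by
      have h2 : ∏ X : {U // U ∈ US T r},
            (marg P X.val x * ∏ i ∈ fib T r X.val, marg P (T.C i ∩ T.C (par T r i)) x)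
          = ∏ X : {U // U ∈ US T r},
            (marg P (T.C (cenU T r X.val)) x * ∏ i ∈ fib T r X.val, marg P (T.C i) x) :=
        Finset.prod_congr rfl (fun X _ => hblk X)
      rw [Finset.prod_mul_distrib, Finset.prod_mul_distrib] at h2
      rw [hfibs, hfibs] at h2
      exact h2
    have hcenρ : cenU T r ρ.val = r := root_cen hrc0
    have hsplitT : ∏ i : T.ι, marg P (T.C i) x
        = marg P (T.C r) x * ∏ i ∈ Finset.univ.erase r, marg P (T.C i) x :=
      (Finset.mul_prod_erase Finset.univ _ (Finset.mem_univ r)).symm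
    have hsplitQ : ∏ X : {U // U ∈ US T r}, marg P (T.C (cenU T r X.val)) x
        = marg P (T.C r) x
            * ∏ X ∈ Finset.univ.erase ρ, marg P (T.C (cenU T r X.val)) x := by
      rw [← Finset.mul_prod_erase Finset.univ
        (fun X : {U // U ∈ US T r} => marg P (T.C (cenU T r X.val)) x)
        (Finset.mem_univ ρ), hcenρ]
    have hfinal : P x * ∏ X ∈ Finset.univ.erase ρ, marg P (T.C (cenU T r X.val)) x
        = ∏ X : {U // U ∈ US T r}, marg P X.val x := by
      by_cases hS : ∏ i ∈ Finset.univ.erase r,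
          marg P (T.C i ∩ T.C (par T r i)) x = 0
      · obtain ⟨i, hi, hgi⟩ := Finset.prod_eq_zero_iff.mp hS
        have hPzero : P x = 0 := by
          have h1 : P x ≤ 0 := hgi ▸ self_le_marg hP0 _ x
          exact le_antisymm h1 (hP0 x)
        have hir := (Finset.mem_erase.mp hi).1
        have hXzero : marg P (uni T r i) x = 0 := by
          refine marg_zero_of_subset hP0 ?_ hgi
          exact Finset.Subset.trans Finset.inter_subset_left Finset.subset_union_left
        rw [hPzero, zero_mul]
        symm
        exact Finset.prod_eq_zero
          (Finset.mem_univ (⟨uni T r i, mem_US.mpr ⟨i, hir, rfl⟩⟩ : {U // U ∈ US T r}))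
          hXzero
      · apply mul_right_cancel₀ hS
        calc (P x * ∏ X ∈ Finset.univ.erase ρ, marg P (T.C (cenU T r X.val)) x)
              * ∏ i ∈ Finset.univ.erase r, marg P (T.C i ∩ T.C (par T r i)) x
            = (P x * ∏ i ∈ Finset.univ.erase r, marg P (T.C i ∩ T.C (par T r i)) x)
                * ∏ X ∈ Finset.univ.erase ρ, marg P (T.C (cenU T r X.val)) x := by
              ring
          _ = (∏ i : T.ι, marg P (T.C i) x)
                * ∏ X ∈ Finset.univ.erase ρ, marg P (T.C (cenU T r X.val)) x := by
              rw [hPx]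
          _ = (marg P (T.C r) x
                * ∏ X ∈ Finset.univ.erase ρ, marg P (T.C (cenU T r X.val)) x)
                * ∏ i ∈ Finset.univ.erase r, marg P (T.C i) x := by
              rw [hsplitT]; ring
          _ = (∏ X : {U // U ∈ US T r}, marg P (T.C (cenU T r X.val)) x)
                * ∏ i ∈ Finset.univ.erase r, marg P (T.C i) x := by
              rw [hsplitQ]
          _ = (∏ X : {U // U ∈ US T r}, marg P X.val x)
                * ∏ i ∈ Finset.univ.erase r, marg P (T.C i ∩ T.C (par T r i)) x :=
              hall.symm
    calc P x * ∏ e ∈ Q.edgeFinset, marg P (Q.sep e) x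
        = P x * ∏ X ∈ Finset.univ.erase ρ, marg P (T.C (cenU T r X.val)) x := by
          rw [hQefin, Finset.prod_image hinj]
          congr 1
          exact Finset.prod_congr rfl hsepconv
      _ = ∏ X : {U // U ∈ US T r}, marg P X.val x := hfinal
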